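/- arXiv:1405.3948 — 14 statements merged into one kernel-verified Lean document; each statement's English description precedes it below -/
import Mathlib

section
/- Let F : ℝ → ℝ. Then F* is finite-valued and additive (F*(u+v) = F*(u) + F*(v) ∈ ℝ for all u, v ∈ ℝ) if and only if 𝔸_F = ℝ and F*(u) = G(u) for all u ∈ ℝ (i.e. for every u the limit lim_{x→+∞}(F(u+x) − F(x)) exists, is finite, and equals F*(u)). -/
open Filter Topology

/-- `AF F` is the set of `u` for which `lim_{x→∞} (F(u+x) - F(x))` exists and is finite. -/
def AF (F : ℝ → ℝ) : Set ℝ :=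
  {u | ∃ L : ℝ, Tendsto (fun x => F (u + x) - F x) atTop (𝓝 L)}

/-- `Gfun F u = lim_{x→∞} (F(u+x) - F(x))` (when it exists). -/
noncomputable def Gfun (F : ℝ → ℝ) (u : ℝ) : ℝ :=
  limUnder atTop (fun x => F (u + x) - F x)

/-- `Fstar F u = limsup_{x→∞} (F(u+x) - F(x))`, with values in the extended reals. -/
noncomputable def Fstar (F : ℝ → ℝ) (u : ℝ) : EReal :=
  limsup (fun x => ((F (u + x) - F x : ℝ) : EReal)) atTop

lemma fstar_of_tendsto {F : ℝ → ℝ} {u L : ℝ}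
    (h : Tendsto (fun x => F (u + x) - F x) atTop (𝓝 L)) : Fstar F u = (L : EReal) := by
  have h' : Tendsto (fun x => ((F (u + x) - F x : ℝ) : EReal)) atTop (𝓝 (L : EReal)) :=
    EReal.tendsto_coe.mpr h
  exact h'.limsup_eq

lemma fstar_zero (F : ℝ → ℝ) : Fstar F 0 = 0 := by
  have : Fstar F 0 = ((0 : ℝ) : EReal) :=
    fstar_of_tendsto (by simp only [zero_add, sub_self]; exact tendsto_const_nhds (x := (0:ℝ)) (f := atTop))
  simpa using this

lemma liminf_eq_neg_fstar (F : ℝ → ℝ) (u : ℝ) :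
    liminf (fun x => ((F (u + x) - F x : ℝ) : EReal)) atTop = - Fstar F (-u) := by
  have hmap : map (fun x : ℝ => u + x) atTop = atTop :=
    OrderIso.map_atTop (OrderIso.addLeft u)
  have hcomp : Fstar F (-u) =
      limsup (fun x => ((F x - F (u + x) : ℝ) : EReal)) atTop := by
    have : (fun y => ((F (-u + y) - F y : ℝ) : EReal)) ∘ (fun x : ℝ => u + x)
        = fun x => ((F x - F (u + x) : ℝ) : EReal) := by
      funext x; simp
    rw [Fstar, ← this, limsup_comp, hmap]
  have hneg : (fun x => ((F x - F (u + x) : ℝ) : EReal))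
      = - (fun x => ((F (u + x) - F x : ℝ) : EReal)) := by
    funext x
    rw [Pi.neg_apply, ← EReal.coe_neg, neg_sub]
  rw [hcomp, hneg, EReal.limsup_neg, neg_neg]

/-- Proposition 1 (iv): `F*` is finite-valued and additive iff `AF F = ℝ` and `F* = G`. -/
theorem additive_kernel_iv (F : ℝ → ℝ) :
    ((∀ u : ℝ, ∃ r : ℝ, Fstar F u = (r : EReal)) ∧
      (∀ u v : ℝ, Fstar F (u + v) = Fstar F u + Fstar F v)) ↔
    (AF F = Set.univ ∧ ∀ u : ℝ, Fstar F u = ((Gfun F u : ℝ) : EReal)) := by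
  constructor
  · rintro ⟨hfin, hadd⟩
    have key : ∀ u : ℝ, ∃ r : ℝ, Fstar F u = (r : EReal) ∧
        Tendsto (fun x => F (u + x) - F x) atTop (𝓝 r) := by
      intro u
      obtain ⟨r, hr⟩ := hfin u
      obtain ⟨s, hs⟩ := hfin (-u)
      have h0 : (r : EReal) + (s : EReal) = 0 := by
        rw [← hr, ← hs, ← hadd u (-u), add_neg_cancel, fstar_zero]
      have hsr : s = -r := by
        have : ((r + s : ℝ) : EReal) = ((0:ℝ) : EReal) := by
          rw [EReal.coe_add]; simpa using h0
        have := EReal.coe_eq_coe_iff.mp this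
        linarith
      have hliminf : liminf (fun x => ((F (u + x) - F x : ℝ) : EReal)) atTop = (r : EReal) := by
        rw [liminf_eq_neg_fstar, hs, hsr]
        simp [← EReal.coe_neg]
      have htd : Tendsto (fun x => ((F (u + x) - F x : ℝ) : EReal)) atTop (𝓝 (r : EReal)) :=
        tendsto_of_liminf_eq_limsup hliminf hr
      exact ⟨r, hr, EReal.tendsto_coe.mp htd⟩
    constructor
    · ext u
      simp only [Set.mem_univ, iff_true]
      obtain ⟨r, _, hrt⟩ := key u
      exact ⟨r, hrt⟩
    · intro u
      obtain ⟨r, hr, hrt⟩ := key u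
      rw [hr, Gfun, hrt.limUnder_eq]
  · rintro ⟨hAF, hG⟩
    have hlim : ∀ u : ℝ, Tendsto (fun x => F (u + x) - F x) atTop (𝓝 (Gfun F u)) := by
      intro u
      have : u ∈ AF F := hAF ▸ Set.mem_univ u
      obtain ⟨L, hL⟩ := this
      rw [Gfun, hL.limUnder_eq]
      exact hL
    refine ⟨fun u => ⟨Gfun F u, hG u⟩, fun u v => ?_⟩
    have hsum : Tendsto (fun x => F (u + v + x) - F x) atTop (𝓝 (Gfun F u + Gfun F v)) := by
      have h1 : Tendsto (fun x => F (u + (v + x)) - F (v + x)) atTop (𝓝 (Gfun F u)) := by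
        have hvx : Tendsto (fun x : ℝ => v + x) atTop atTop :=
          tendsto_atTop_add_const_left _ v tendsto_id
        exact (hlim u).comp hvx
      have h2 := hlim v
      have := h1.add h2
      refine this.congr (fun x => ?_)
      ring_nf
    rw [fstar_of_tendsto hsum, hG u, hG v, EReal.coe_add]
end

section
/- Proposition 3: Let 𝔸 be a dense additive subgroup of ℝ and let G : 𝔸 → ℝ be additive on 𝔸 (G(a+b) = G(a) + G(b) for all a, b ∈ 𝔸) and right-continuous at 0 relative to 𝔸 (G(δ) → 0 as δ → 0 through positive elements of 𝔸). Then G is linear on 𝔸: there exists c ∈ ℝ such that G(u) = cu for all u ∈ 𝔸. -/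
open Filter Topology

/-- Proposition 3: an additive function on a dense additive subgroup of `ℝ`,
right-continuous at `0` relative to the subgroup, is linear on the subgroup. -/
theorem prop3 (A : AddSubgroup ℝ) (hdense : Dense (A : Set ℝ)) (G : ℝ → ℝ)
    (hadd : ∀ a ∈ A, ∀ b ∈ A, G (a + b) = G a + G b)
    (hrc : ∀ ε > (0 : ℝ), ∃ δ > (0 : ℝ), ∀ a : ℝ, a ∈ A → 0 < a → a < δ → |G a| < ε) :
    ∃ c : ℝ, ∀ u ∈ A, G u = c * u := by
  -- a positive element of A
  obtain ⟨u₀, hu₀A, hu₀mem⟩ : ∃ x ∈ (A : Set ℝ), x ∈ Set.Ioo (0:ℝ) 1 := by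
    exact hdense.exists_mem_open (isOpen_Ioo : IsOpen (Set.Ioo (0:ℝ) 1))
      ⟨(1:ℝ)/2, by norm_num, by norm_num⟩
  have hu₀pos : 0 < u₀ := hu₀mem.1
  set c : ℝ := G u₀ / u₀ with hc
  refine ⟨c, ?_⟩
  intro u huA
  by_contra hne
  set H : ℝ → ℝ := fun a => G a - c * a with hHdef
  have hHadd : ∀ a ∈ A, ∀ b ∈ A, H (a + b) = H a + H b := by
    intro a ha b hb
    simp only [hHdef, hadd a ha b hb]; ring
  have hH0 : H 0 = 0 := by
    have := hHadd 0 A.zero_mem 0 A.zero_mem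
    simpa using this
  -- integer multiples
  have hint : ∀ (n : ℤ) (a : ℝ), a ∈ A → H (n * a) = n * H a := by
    let φ : A →+ ℝ := AddMonoidHom.mk' (fun a => H (a : ℝ)) (by
      intro a b
      exact hHadd a a.2 b b.2)
    intro n a ha
    have := map_zsmul φ n ⟨a, ha⟩
    simpa [φ, zsmul_eq_mul] using this
  have hHu₀ : H u₀ = 0 := by
    simp only [hHdef, hc]
    field_simp
    ring
  have hHu : H u ≠ 0 := by
    simp only [hHdef, sub_ne_zero]
    exact hne
  -- right continuity of H at 0
  have hrcH : ∀ ε > (0:ℝ), ∃ δ > (0:ℝ), ∀ a : ℝ, a ∈ A → 0 < a → a < δ → |H a| < ε := by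
    intro ε hε
    obtain ⟨δ₁, hδ₁, h1⟩ := hrc (ε/2) (by positivity)
    refine ⟨min δ₁ (ε/(2*(|c|+1))), by positivity, ?_⟩
    intro a ha hpos hlt
    have hGa : |G a| < ε/2 := h1 a ha hpos (lt_of_lt_of_le hlt (min_le_left _ _))
    have ha2 : a < ε/(2*(|c|+1)) := lt_of_lt_of_le hlt (min_le_right _ _)
    have hca : |c * a| < ε/2 := by
      have h1' : |c * a| = |c| * a := by
        rw [abs_mul, abs_of_pos hpos]
      rw [h1']
      calc |c| * a ≤ (|c|+1) * a := by nlinarith [abs_nonneg c]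
        _ < (|c|+1) * (ε/(2*(|c|+1))) := by
            have : 0 < |c| + 1 := by positivity
            exact mul_lt_mul_of_pos_left ha2 this
        _ = ε/2 := by
            field_simp
    calc |H a| = |G a - c * a| := rfl
      _ ≤ |G a| + |c * a| := abs_sub _ _
      _ < ε/2 + ε/2 := by linarith
      _ = ε := by ring
  obtain ⟨δ, hδpos, hδ⟩ := hrcH 1 one_pos
  -- a small positive element w of A
  obtain ⟨w, hwA, hwmem⟩ : ∃ x ∈ (A : Set ℝ), x ∈ Set.Ioo (0:ℝ) δ := by
    exact hdense.exists_mem_open (isOpen_Ioo : IsOpen (Set.Ioo (0:ℝ) δ))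
      ⟨δ/2, by positivity, by linarith⟩
  have hwpos : 0 < w := hwmem.1
  have hHw : |H w| < 1 := hδ w hwA hwpos hwmem.2
  -- boundedness of H on A ∩ (0, u₀]
  have hbound : ∀ x : ℝ, x ∈ A → 0 < x → x ≤ u₀ → |H x| ≤ u₀ / w + 1 := by
    intro x hx hxpos hxle
    set m : ℤ := ⌊x / w⌋ with hm
    have hm0 : 0 ≤ m := Int.floor_nonneg.2 (by positivity)
    have hmle : (m : ℝ) ≤ x / w := Int.floor_le _
    have hmub : (m : ℝ) ≤ u₀ / w := hmle.trans ((div_le_div_iff_of_pos_right hwpos).2 hxle)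
    set r : ℝ := x - m * w with hr
    have hr0 : 0 ≤ r := by
      have : (m : ℝ) * w ≤ x := by
        rw [← le_div_iff₀ hwpos]; exact hmle
      linarith
    have hrlt : r < w := by
      have : x / w < m + 1 := Int.lt_floor_add_one _
      have := (div_lt_iff₀ hwpos).1 this
      simp only [hr]; nlinarith
    have hrA : r ∈ A := by
      have hmw : (m : ℝ) * w ∈ A := by
        have := A.zsmul_mem hwA m
        simpa [zsmul_eq_mul] using this
      exact A.sub_mem hx hmw
    have hx_eq : x = m * w + r := by simp [hr]
    have hHx : H x = m * H w + H r := by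
      rw [hx_eq, hHadd _ (by
        have := A.zsmul_mem hwA m
        simpa [zsmul_eq_mul] using this) _ hrA, hint m w hwA]
    have hHr : |H r| ≤ 1 := by
      rcases eq_or_lt_of_le hr0 with h | h
      · rw [← h]; simp [hH0]
      · exact le_of_lt (hδ r hrA h (hrlt.trans hwmem.2))
    rw [hHx]
    calc |(m : ℝ) * H w + H r| ≤ |(m:ℝ) * H w| + |H r| := abs_add_le _ _
      _ ≤ (m : ℝ) * |H w| + 1 := by
          rw [abs_mul, abs_of_nonneg (by exact_mod_cast hm0 : (0:ℝ) ≤ (m:ℝ))]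
          linarith
      _ ≤ u₀ / w + 1 := by
          have hm1 : (m : ℝ) * |H w| ≤ (m : ℝ) := by
            nlinarith [abs_nonneg (H w), (by exact_mod_cast hm0 : (0:ℝ) ≤ (m:ℝ))]
          linarith
  -- unboundedness: pick N large
  have hd : 0 < |H u| := abs_pos.2 hHu
  obtain ⟨N, hN⟩ := exists_nat_gt ((u₀ / w + 1) / |H u|)
  have hNbig : (u₀ / w + 1) < N * |H u| := by
    have := (div_lt_iff₀ hd).1 hN
    linarith
  set k : ℤ := ⌈(N * u) / u₀⌉ with hk
  set v : ℝ := N * u - (k - 1) * u₀ with hv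
  have hkub : (N * u) / u₀ ≤ (k : ℝ) := Int.le_ceil _
  have hklb : (k : ℝ) - 1 < (N * u) / u₀ := by
    have := Int.ceil_lt_add_one (R := ℝ) ((N * u) / u₀)
    linarith
  have hvpos : 0 < v := by
    have : ((k : ℝ) - 1) * u₀ < N * u := by
      rw [← lt_div_iff₀ hu₀pos] at *
      · exact hklb
    simp only [hv]; push_cast; nlinarith
  have hvle : v ≤ u₀ := by
    have : N * u ≤ (k : ℝ) * u₀ := by
      rw [← div_le_iff₀ hu₀pos] at *
      exact hkub
    simp only [hv]; push_cast; nlinarith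
  have hNuA : (N : ℝ) * u ∈ A := by
    have := A.zsmul_mem huA (N : ℤ)
    simpa [zsmul_eq_mul] using this
  have hkA : ((k : ℝ) - 1) * u₀ ∈ A := by
    have := A.zsmul_mem hu₀A (k - 1)
    have h2 : ((k - 1 : ℤ) : ℝ) = (k : ℝ) - 1 := by push_cast; ring
    simpa [zsmul_eq_mul, h2] using this
  have hvA : v ∈ A := A.sub_mem hNuA hkA
  have hHv : H v = N * H u := by
    have h1 : H v = H (N * u) - H (((k:ℝ) - 1) * u₀) := by
      have := hHadd _ hvA _ hkA
      have heq : v + ((k : ℝ) - 1) * u₀ = N * u := by simp only [hv]; ring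
      rw [heq] at this
      linarith
    have h2 : H ((N : ℝ) * u) = N * H u := by
      have := hint (N : ℤ) u huA
      simpa using this
    have h3 : H (((k:ℝ) - 1) * u₀) = 0 := by
      have := hint (k - 1) u₀ hu₀A
      have h2' : ((k - 1 : ℤ) : ℝ) = (k : ℝ) - 1 := by push_cast; ring
      rw [h2'] at this
      rw [this, hHu₀, mul_zero]
    rw [h1, h2, h3, sub_zero]
  have := hbound v hvA hvpos hvle
  rw [hHv] at this
  have habs : |(N : ℝ) * H u| = N * |H u| := by
    rw [abs_mul, Nat.abs_cast]
  rw [habs] at this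
  linarith
end

section
/- Proposition 5 (Unique extension): Let Σ ⊆ ℝ be dense and closed under integer scaling (nσ ∈ Σ for all σ ∈ Σ and n ∈ ℤ), and suppose G : Σ → ℝ is linear: G(σ) = cσ for some fixed c ∈ ℝ and all σ ∈ Σ. If S : ℝ → ℝ is subadditive with S(0+) = 0 and S extends G (S(σ) = cσ for all σ ∈ Σ), then S(u) = cu for all u ∈ ℝ. -/
open Filter Topology

/-- Proposition 5 (Unique extension): a subadditive `S` with `S(0+) = 0` extending a linear
function on a dense set closed under integer scaling is linear everywhere. -/
theorem prop5 (Sig : Set ℝ) (c : ℝ) (S : ℝ → ℝ)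
    (hdense : Dense Sig)
    (hscale : ∀ σ ∈ Sig, ∀ n : ℤ, (n : ℝ) * σ ∈ Sig)
    (hsub : ∀ u v : ℝ, S (u + v) ≤ S u + S v)
    (h0 : Tendsto S (𝓝[>] (0 : ℝ)) (𝓝 0))
    (hext : ∀ σ ∈ Sig, S σ = c * σ) :
    ∀ u : ℝ, S u = c * u := by
  intro u
  have key : ∀ ε > (0:ℝ), |S u - c * u| ≤ 2 * ε := by
    intro ε hε
    rw [Metric.tendsto_nhdsWithin_nhds] at h0
    obtain ⟨δ, hδpos, hδ⟩ := h0 ε hε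
    set δ' : ℝ := min δ (ε / (|c| + 1)) with hδ'def
    have hcpos : (0:ℝ) < |c| + 1 := by positivity
    have hδ'pos : 0 < δ' := lt_min hδpos (by positivity)
    have hsmall : ∀ v : ℝ, 0 < v → v < δ' → |S v| < ε := by
      intro v hv hv'
      have := hδ (x := v) hv (by simpa [Real.dist_eq, abs_of_pos hv] using lt_of_lt_of_le hv' (min_le_left _ _))
      simpa [Real.dist_eq] using this
    have hcδ : |c| * δ' ≤ ε := by
      have h1 : δ' ≤ ε / (|c| + 1) := min_le_right _ _
      have h2 : |c| * δ' ≤ |c| * (ε / (|c| + 1)) :=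
        mul_le_mul_of_nonneg_left h1 (abs_nonneg c)
      have h3 : |c| * (ε / (|c| + 1)) ≤ ε := by
        rw [mul_div_assoc'] at *
        rw [div_le_iff₀ hcpos]
        nlinarith [abs_nonneg c]
      linarith
    obtain ⟨σ₁, hσ₁S, hσ₁⟩ := hdense.exists_between (show u - δ' < u by linarith)
    obtain ⟨σ₂, hσ₂S, hσ₂⟩ := hdense.exists_between (show u < u + δ' by linarith)
    -- upper bound
    have hub : S u - c * u ≤ 2 * ε := by
      have h1 : S u ≤ S σ₁ + S (u - σ₁) := by
        have := hsub σ₁ (u - σ₁); simpa using this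
      rw [hext σ₁ hσ₁S] at h1
      have h2 : |S (u - σ₁)| < ε := hsmall _ (by linarith [hσ₁.2]) (by linarith [hσ₁.1])
      have h3 : c * σ₁ - c * u ≤ |c| * δ' := by
        have : c * σ₁ - c * u = c * (σ₁ - u) := by ring
        rw [this]
        calc c * (σ₁ - u) ≤ |c * (σ₁ - u)| := le_abs_self _
          _ = |c| * |σ₁ - u| := abs_mul _ _
          _ ≤ |c| * δ' := by
              apply mul_le_mul_of_nonneg_left _ (abs_nonneg c)
              rw [abs_le]; constructor <;> [linarith [hσ₁.1]; linarith [hσ₁.2]]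
      have := abs_lt.mp h2
      linarith
    -- lower bound
    have hlb : c * u - S u ≤ 2 * ε := by
      have h1 : S σ₂ ≤ S u + S (σ₂ - u) := by
        have := hsub u (σ₂ - u); simpa using this
      rw [hext σ₂ hσ₂S] at h1
      have h2 : |S (σ₂ - u)| < ε := hsmall _ (by linarith [hσ₂.1]) (by linarith [hσ₂.2])
      have h3 : c * u - c * σ₂ ≤ |c| * δ' := by
        have : c * u - c * σ₂ = c * (u - σ₂) := by ring
        rw [this]
        calc c * (u - σ₂) ≤ |c * (u - σ₂)| := le_abs_self _
          _ = |c| * |u - σ₂| := abs_mul _ _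
          _ ≤ |c| * δ' := by
              apply mul_le_mul_of_nonneg_left _ (abs_nonneg c)
              rw [abs_le]; constructor <;> [linarith [hσ₂.2]; linarith [hσ₂.1]]
      have := abs_lt.mp h2
      linarith
    rw [abs_le]
    constructor <;> linarith
  have : |S u - c * u| ≤ 0 := by
    by_contra h
    push_neg at h
    have := key (|S u - c * u| / 4) (by linarith)
    linarith
  have := abs_nonneg (S u - c * u)
  have h0' : |S u - c * u| = 0 := le_antisymm ‹_› ‹_›
  have := abs_eq_zero.mp h0'
  linarith
end

section
/- Theorem 2 (On linearity): Let S : ℝ → ℝ be subadditive with S(0+) = 0. If, for some dense additive subgroup 𝔸 of ℝ, the restriction of S to 𝔸 is additive (S(a+b) = S(a) + S(b) for all a, b ∈ 𝔸) and right-continuous relative to 𝔸 (at each a ∈ 𝔸, S(x) → S(a) as x → a through elements of 𝔸 with x > a), then S is linear on ℝ: S(u) = cu for some c ∈ ℝ and all u ∈ ℝ. -/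
open Filter Topology

/-- Theorem 2 (On linearity): a subadditive `S : ℝ → ℝ` with `S(0+) = 0` whose restriction
to a dense additive subgroup is additive and right-continuous is linear on `ℝ`. -/
theorem theorem2 (S : ℝ → ℝ) (A : AddSubgroup ℝ)
    (hsub : ∀ u v : ℝ, S (u + v) ≤ S u + S v)
    (h0 : Tendsto S (𝓝[>] (0 : ℝ)) (𝓝 0))
    (hdense : Dense (A : Set ℝ))
    (hadd : ∀ a ∈ A, ∀ b ∈ A, S (a + b) = S a + S b)
    (hrc : ∀ a ∈ A, Tendsto S (𝓝[(A : Set ℝ) ∩ Set.Ioi a] a) (𝓝 (S a))) :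
    ∃ c : ℝ, ∀ u : ℝ, S u = c * u := by
  -- S 0 = 0
  have h00 : S 0 = 0 := by
    have := hadd 0 A.zero_mem 0 A.zero_mem
    simp at this
    linarith
  have hneg : ∀ a ∈ A, S (-a) = - S a := by
    intro a ha
    have := hadd a ha (-a) (A.neg_mem ha)
    simp [h00] at this
    linarith
  -- membership of natural/integer multiples
  have hmemN : ∀ (n : ℕ) (a : ℝ), a ∈ A → (n : ℝ) * a ∈ A := by
    intro n a ha
    have := A.nsmul_mem ha n
    simpa [nsmul_eq_mul] using this
  have hmemZ : ∀ (k : ℤ) (a : ℝ), a ∈ A → (k : ℝ) * a ∈ A := by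
    intro k a ha
    have := A.zsmul_mem ha k
    simpa [zsmul_eq_mul] using this
  have hnat : ∀ (n : ℕ) (a : ℝ), a ∈ A → S ((n : ℝ) * a) = n * S a := by
    intro n a ha
    induction n with
    | zero => simp [h00]
    | succ k ih =>
      have hm : ((k : ℝ) + 1) * a = (k : ℝ) * a + a := by ring
      push_cast
      rw [hm, hadd _ (hmemN k a ha) _ ha, ih]
      ring
  have hint : ∀ (k : ℤ) (a : ℝ), a ∈ A → S ((k : ℝ) * a) = k * S a := by
    intro k a ha
    rcases le_or_gt 0 k with hk | hk
    · lift k to ℕ using hk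
      exact_mod_cast hnat k a ha
    · have hk' : 0 ≤ -k := by omega
      have h1 := hnat (-k).toNat a ha
      have h2 : (((-k).toNat : ℝ)) = -(k : ℝ) := by
        have : ((-k).toNat : ℤ) = -k := Int.toNat_of_nonneg hk'
        exact_mod_cast congrArg (Int.cast : ℤ → ℝ) this
      rw [h2] at h1
      have h3 : S (-((k : ℝ) * a)) = -(k : ℝ) * S a := by
        rw [← h1]; ring_nf
      have h4 := hneg ((k : ℝ) * a) (hmemZ k a ha)
      rw [h4] at h3
      linarith
  -- bound near zero
  obtain ⟨δ₀, hδ₀, hb⟩ := Metric.tendsto_nhdsWithin_nhds.mp h0 1 one_pos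
  have small : ∀ x ∈ A, |x| < δ₀ → |S x| ≤ 1 := by
    intro x hx hxδ
    rcases lt_trichotomy x 0 with h | h | h
    · have hx' : -x ∈ Set.Ioi (0 : ℝ) := by simp [Set.mem_Ioi]; linarith
      have hd : dist (-x) 0 < δ₀ := by
        rw [Real.dist_eq, sub_zero]; rwa [abs_neg]
      have := hb hx' hd
      rw [Real.dist_eq, sub_zero] at this
      rw [hneg x hx] at this
      rw [abs_neg] at this
      calc |S x| = |S x| := rfl
        _ ≤ 1 := by
          have hxx := hneg x hx
          have : |S (-x)| < 1 := by
            have := hb hx' hd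
            rwa [Real.dist_eq, sub_zero] at this
          rw [hxx, abs_neg] at this
          linarith [this]
    · simp [h, h00]
    · have hx' : x ∈ Set.Ioi (0 : ℝ) := h
      have hd : dist x 0 < δ₀ := by rw [Real.dist_eq, sub_zero]; exact hxδ
      have := hb hx' hd
      rw [Real.dist_eq, sub_zero] at this
      linarith
  -- pick a small positive element e of A
  obtain ⟨e, ⟨he0, heδ⟩, heA⟩ := hdense.inter_open_nonempty (Set.Ioo 0 δ₀) isOpen_Ioo
    (Set.nonempty_Ioo.mpr hδ₀)
  set c : ℝ := S e / e with hc
  have hene : e ≠ 0 := ne_of_gt he0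
  -- linearity on A for nonnegative elements
  have linA0 : ∀ a ∈ A, 0 ≤ a → S a = c * a := by
    intro a ha ha0
    by_contra hne
    have hd : 0 < |S a - c * a| := by
      rw [abs_pos]
      intro h; apply hne; linarith
    obtain ⟨n, hn⟩ := exists_nat_gt ((|S e| + 1) / |S a - c * a|)
    have hnpos : 0 < (n : ℝ) := lt_of_le_of_lt (by positivity) hn
    have key : (n : ℝ) * |S a - c * a| ≤ |S e| + 1 := by
      set k : ℤ := ⌊((n : ℝ) * a) / e⌋ with hk
      have hfl := Int.floor_le (((n : ℝ) * a) / e)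
      have hfl' := Int.lt_floor_add_one (((n : ℝ) * a) / e)
      have hke : (k : ℝ) * e ≤ (n : ℝ) * a := by
        rw [← le_div_iff₀ he0]; exact hfl
      have hke' : (n : ℝ) * a < ((k : ℝ) + 1) * e := by
        rw [← div_lt_iff₀ he0]; exact_mod_cast hfl'
      set r : ℝ := (n : ℝ) * a - (k : ℝ) * e with hr
      have hrA : r ∈ A := A.sub_mem (hmemN n a ha) (hmemZ k e heA)
      have hr0 : 0 ≤ r := by simp [hr]; linarith
      have hr1 : r < e := by simp [hr]; nlinarith
      have hSr : |S r| ≤ 1 := small r hrA (by rw [abs_of_nonneg hr0]; linarith)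
      have hsplit : S ((n : ℝ) * a) = (k : ℝ) * S e + S r := by
        have : (n : ℝ) * a = (k : ℝ) * e + r := by simp [hr]
        rw [this, hadd _ (hmemZ k e heA) _ hrA, hint k e heA]
      have hSn : S ((n : ℝ) * a) = (n : ℝ) * S a := hnat n a ha
      have hca : c * ((n : ℝ) * a) = S e * (((n : ℝ) * a) / e) := by
        rw [hc]; ring
      have hid : (n : ℝ) * (S a - c * a) = S e * ((k : ℝ) - ((n : ℝ) * a) / e) + S r := by
        have h1 : (n : ℝ) * S a = (k : ℝ) * S e + S r := by rw [← hSn, hsplit]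
        have h2 : (n : ℝ) * (c * a) = S e * (((n : ℝ) * a) / e) := by
          rw [← hca]; ring
        calc (n : ℝ) * (S a - c * a) = (n : ℝ) * S a - (n : ℝ) * (c * a) := by ring
          _ = (k : ℝ) * S e + S r - S e * (((n : ℝ) * a) / e) := by rw [h1, h2]
          _ = S e * ((k : ℝ) - ((n : ℝ) * a) / e) + S r := by ring
      have habs : |(k : ℝ) - ((n : ℝ) * a) / e| ≤ 1 := by
        rw [abs_le]; constructor <;> [linarith; linarith]
      calc (n : ℝ) * |S a - c * a| = |(n : ℝ) * (S a - c * a)| := by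
            rw [abs_mul, abs_of_pos hnpos]
        _ = |S e * ((k : ℝ) - ((n : ℝ) * a) / e) + S r| := by rw [hid]
        _ ≤ |S e * ((k : ℝ) - ((n : ℝ) * a) / e)| + |S r| := abs_add_le _ _
        _ ≤ |S e| * 1 + 1 := by
            rw [abs_mul]
            gcongr
        _ = |S e| + 1 := by ring
    have : (|S e| + 1) / |S a - c * a| < (n : ℝ) := hn
    rw [div_lt_iff₀ hd] at this
    linarith
  have linA : ∀ a ∈ A, S a = c * a := by
    intro a ha
    rcases le_or_gt 0 a with h | h
    · exact linA0 a ha h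
    · have h1 := linA0 (-a) (A.neg_mem ha) (by linarith)
      have h2 := hneg (-a) (A.neg_mem ha)
      rw [neg_neg] at h2
      rw [h1] at h2
      linarith
  refine ⟨c, fun u => ?_⟩
  -- upper and lower bounds by approximation
  have upper : ∀ ε > 0, S u ≤ c * u + ε := by
    intro ε hε
    obtain ⟨δ, hδ, hB⟩ := Metric.tendsto_nhdsWithin_nhds.mp h0 (ε/2) (by positivity)
    set δ' : ℝ := min δ (ε / (2 * (|c| + 1))) with hδ'
    have hδ'0 : 0 < δ' := lt_min hδ (by positivity)
    obtain ⟨a, ha, haA⟩ := hdense.inter_open_nonempty (Set.Ioo (u - δ') u) isOpen_Ioo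
      (Set.nonempty_Ioo.mpr (by linarith))
    have hua : 0 < u - a := by linarith [ha.2]
    have hua' : u - a < δ := lt_of_lt_of_le (by linarith [ha.1]) (min_le_left _ _)
    have hSd : |S (u - a)| < ε/2 := by
      have := hB (Set.mem_Ioi.mpr hua) (by rw [Real.dist_eq, sub_zero, abs_of_pos hua]; exact hua')
      rwa [Real.dist_eq, sub_zero] at this
    have h1 : S u ≤ S a + S (u - a) := by
      have := hsub a (u - a)
      simpa using this
    have h2 : S a = c * a := linA a haA
    have h3 : c * a ≤ c * u + ε/2 := by
      have habs : |c * a - c * u| ≤ |c| * δ' := by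
        rw [← mul_sub, abs_mul]
        gcongr
        rw [abs_of_nonpos (by linarith [ha.2])]
        linarith [ha.1]
      have hδ'le : δ' ≤ ε / (2 * (|c| + 1)) := min_le_right _ _
      have : |c| * δ' ≤ ε / 2 := by
        have h4 : |c| * δ' ≤ |c| * (ε / (2 * (|c| + 1))) := by
          have := abs_nonneg c
          gcongr
        have h5 : |c| * (ε / (2 * (|c| + 1))) ≤ ε / 2 := by
          rw [mul_comm, div_mul_eq_mul_div, div_le_div_iff₀ (by positivity) (by norm_num : (0:ℝ) < 2)]
          nlinarith [abs_nonneg c, hε.le]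
        linarith
      have := abs_le.mp habs
      linarith [this.1, this.2]
    have := abs_le.mp hSd.le
    linarith [this.2]
  have lower : ∀ ε > 0, c * u - ε ≤ S u := by
    intro ε hε
    obtain ⟨δ, hδ, hB⟩ := Metric.tendsto_nhdsWithin_nhds.mp h0 (ε/2) (by positivity)
    set δ' : ℝ := min δ (ε / (2 * (|c| + 1))) with hδ'
    have hδ'0 : 0 < δ' := lt_min hδ (by positivity)
    obtain ⟨a, ha, haA⟩ := hdense.inter_open_nonempty (Set.Ioo u (u + δ')) isOpen_Ioo
      (Set.nonempty_Ioo.mpr (by linarith))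
    have hau : 0 < a - u := by linarith [ha.1]
    have hau' : a - u < δ := lt_of_lt_of_le (by linarith [ha.2]) (min_le_left _ _)
    have hSd : |S (a - u)| < ε/2 := by
      have := hB (Set.mem_Ioi.mpr hau) (by rw [Real.dist_eq, sub_zero, abs_of_pos hau]; exact hau')
      rwa [Real.dist_eq, sub_zero] at this
    have h1 : S a ≤ S u + S (a - u) := by
      have := hsub u (a - u)
      simpa using this
    have h2 : S a = c * a := linA a haA
    have h3 : c * u - ε/2 ≤ c * a := by
      have habs : |c * u - c * a| ≤ |c| * δ' := by
        rw [← mul_sub, abs_mul]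
        gcongr
        rw [abs_of_nonpos (by linarith [ha.1])]
        linarith [ha.2]
      have hδ'le : δ' ≤ ε / (2 * (|c| + 1)) := min_le_right _ _
      have : |c| * δ' ≤ ε / 2 := by
        have h4 : |c| * δ' ≤ |c| * (ε / (2 * (|c| + 1))) := by
          have := abs_nonneg c
          gcongr
        have h5 : |c| * (ε / (2 * (|c| + 1))) ≤ ε / 2 := by
          rw [mul_comm, div_mul_eq_mul_div, div_le_div_iff₀ (by positivity) (by norm_num : (0:ℝ) < 2)]
          nlinarith [abs_nonneg c, hε.le]
        linarith
      have := abs_le.mp habs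
      linarith [this.1, this.2]
    have := abs_le.mp hSd.le
    linarith [this.2]
  have hle : S u ≤ c * u := by
    by_contra h
    push_neg at h
    have := upper ((S u - c * u)/2) (by linarith)
    linarith
  have hge : c * u ≤ S u := by
    by_contra h
    push_neg at h
    have := lower ((c * u - S u)/2) (by linarith)
    linarith
  linarith
end

section
/- Proposition 6 (On finiteness): Let S : ℝ → ℝ ∪ {±∞} be subadditive and suppose (i) S is finite (|S| < ∞) on a subset Σ ⊆ ℝ that is unbounded below, and (ii) limsup_{u↓0} S(u) ≤ 0. Then S is finite everywhere: S(u) ∈ ℝ for all u ∈ ℝ. -/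
open Filter Topology

/-- Proposition 6 (On finiteness): a subadditive extended-real-valued `S`, finite on a set
unbounded below and with `limsup_{u↓0} S(u) ≤ 0`, is finite everywhere. -/
theorem prop6 (S : ℝ → EReal) (Sig : Set ℝ)
    (hsub : ∀ u v : ℝ, S (u + v) ≤ S u + S v)
    (hunb : ∀ b : ℝ, ∃ x ∈ Sig, x < b)
    (hfin : ∀ x ∈ Sig, S x ≠ ⊤ ∧ S x ≠ ⊥)
    (hlimsup : limsup S (𝓝[>] (0 : ℝ)) ≤ 0) :
    ∀ u : ℝ, S u ≠ ⊤ ∧ S u ≠ ⊥ := by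
  -- eventually S u < 1 near 0⁺
  have h1 : ∀ᶠ u in 𝓝[>] (0:ℝ), S u < 1 :=
    eventually_lt_of_limsup_lt (lt_of_le_of_lt hlimsup (by norm_num))
  obtain ⟨δ, hδ0, hδ⟩ := mem_nhdsGT_iff_exists_Ioo_subset.mp h1
  simp only [Set.mem_Ioi] at hδ0
  -- iterating subadditivity
  have key : ∀ n : ℕ, ∀ v : ℝ, S v ≠ ⊤ → S ((n + 1) * v) ≠ ⊤ := by
    intro n
    induction n with
    | zero => intro v hv; simpa using hv
    | succ n ih =>
      intro v hv
      have h2 : ((n : ℝ) + 1 + 1) * v = (n + 1) * v + v := by ring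
      have h3 : S ((n + 1) * v + v) ≤ S ((n + 1) * v) + S v := hsub _ _
      push_cast
      rw [h2]
      exact ne_top_of_le_ne_top (by
        rw [← lt_top_iff_ne_top]
        exact EReal.add_lt_top (ih v hv) hv) h3
  -- S ≠ ⊤ on positives
  have hpos : ∀ u : ℝ, 0 < u → S u ≠ ⊤ := by
    intro u hu
    obtain ⟨n, hn⟩ := exists_nat_gt (u / δ)
    have hn1 : u / δ < (n : ℝ) + 1 := hn.trans (by linarith)
    set v : ℝ := u / ((n : ℝ) + 1) with hv
    have hnpos : (0:ℝ) < (n : ℝ) + 1 := by positivity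
    have hv0 : 0 < v := by positivity
    have hvδ : v < δ := by
      rw [hv, div_lt_iff₀ hnpos]
      calc u = (u / δ) * δ := by field_simp
        _ < ((n:ℝ) + 1) * δ := by
            exact mul_lt_mul_of_pos_right hn1 hδ0
        _ = δ * ((n:ℝ) + 1) := by ring
    have hSv : S v ≠ ⊤ := (hδ ⟨hv0, hvδ⟩).ne_top
    have huv : u = ((n : ℕ) + 1 : ℝ) * v := by
      rw [hv]; field_simp
    have := key n v hSv
    push_cast at this
    rwa [← huv] at this
  -- S ≠ ⊤ everywhere
  have htop : ∀ u : ℝ, S u ≠ ⊤ := by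
    intro u
    rcases lt_or_ge 0 u with h | h
    · exact hpos u h
    · obtain ⟨x, hx, hxu⟩ := hunb u
      have h3 : S u ≤ S x + S (u - x) := by
        have := hsub x (u - x)
        simpa using this
      exact ne_top_of_le_ne_top (by
        rw [← lt_top_iff_ne_top]
        exact EReal.add_lt_top (hfin x hx).1 (hpos (u - x) (by linarith))) h3
  -- S ≠ ⊥ everywhere
  intro u
  refine ⟨htop u, ?_⟩
  intro hb
  obtain ⟨x, hx, _⟩ := hunb u
  have h3 : S x ≤ S u + S (x - u) := by
    have := hsub u (x - u)
    simpa using this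
  rw [hb, EReal.bot_add] at h3
  exact (hfin x hx).2 (le_bot_iff.mp h3)
end

section
/- Proposition 7: Let S : ℝ → ℝ be subadditive. Then: (i) if limsup_{u↓0} S(u) ≤ 0, then S is locally bounded above; (ii) if S is locally bounded above, then S is locally bounded; (iii) if S is locally bounded, then liminf_{t→0} S(t) ≥ 0. -/
open Filter Topology

lemma subadd_nsmul (S : ℝ → ℝ) (hsub : ∀ u v : ℝ, S (u + v) ≤ S u + S v) :
    ∀ n : ℕ, ∀ t : ℝ, S ((n + 1) * t) ≤ (n + 1) * S t := by
  intro n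
  induction n with
  | zero => intro t; simp
  | succ n ih =>
      intro t
      push_cast
      have h1 : ((n : ℝ) + 1 + 1) * t = (n + 1) * t + t := by ring
      calc S (((n : ℝ) + 1 + 1) * t) = S ((n + 1) * t + t) := by rw [h1]
        _ ≤ S ((n + 1) * t) + S t := hsub _ _
        _ ≤ (n + 1) * S t + S t := by linarith [ih t]
        _ = ((n : ℝ) + 1 + 1) * S t := by ring

/-- Proposition 7: for subadditive `S : ℝ → ℝ`:
(i) `limsup_{u↓0} S(u) ≤ 0` implies `S` locally bounded above;
(ii) locally bounded above implies locally bounded;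
(iii) locally bounded implies `liminf_{t→0} S(t) ≥ 0`. -/
theorem prop7 (S : ℝ → ℝ) (hsub : ∀ u v : ℝ, S (u + v) ≤ S u + S v) :
    (limsup (fun u => (S u : EReal)) (𝓝[>] (0 : ℝ)) ≤ 0 →
      ∀ x : ℝ, ∃ U ∈ 𝓝 x, ∃ M : ℝ, ∀ y ∈ U, S y ≤ M) ∧
    ((∀ x : ℝ, ∃ U ∈ 𝓝 x, ∃ M : ℝ, ∀ y ∈ U, S y ≤ M) →
      ∀ x : ℝ, ∃ U ∈ 𝓝 x, ∃ M : ℝ, ∀ y ∈ U, |S y| ≤ M) ∧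
    ((∀ x : ℝ, ∃ U ∈ 𝓝 x, ∃ M : ℝ, ∀ y ∈ U, |S y| ≤ M) →
      0 ≤ liminf (fun t => (S t : EReal)) (𝓝[≠] (0 : ℝ))) := by
  refine ⟨?_, ?_, ?_⟩
  · -- (i)
    intro hls x
    have h1 : limsup (fun u => (S u : EReal)) (𝓝[>] (0 : ℝ)) < (1 : ℝ) := by
      refine lt_of_le_of_lt hls ?_
      exact_mod_cast (by norm_num : (0 : EReal) < (1 : ℝ))
    have hev : ∀ᶠ u in 𝓝[>] (0 : ℝ), (S u : EReal) < (1 : ℝ) :=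
      Filter.eventually_lt_of_limsup_lt h1
    have hev' : ∀ᶠ u in 𝓝[>] (0 : ℝ), S u < 1 := by
      filter_upwards [hev] with u hu
      exact_mod_cast hu
    rw [eventually_nhdsWithin_iff] at hev'
    rcases Metric.eventually_nhds_iff.mp hev' with ⟨δ, hδ, hδb⟩
    set a := x - δ / 2 with ha
    refine ⟨Set.Ioo a (a + δ), ?_, 1 + S a, ?_⟩
    · refine Ioo_mem_nhds ?_ ?_ <;> simp [ha] <;> linarith
    · intro y hy
      have h1 : 0 < y - a := by linarith [hy.1]
      have h2 : |y - a - 0| < δ := by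
        rw [sub_zero, abs_of_pos h1]; linarith [hy.2]
      have h3 : S (y - a) < 1 := hδb h2 h1
      have h4 : S y ≤ S (y - a) + S a := by
        simpa using hsub (y - a) a
      linarith
  · -- (ii)
    intro h x
    obtain ⟨U, hU, M, hM⟩ := h x
    rcases Metric.mem_nhds_iff.mp hU with ⟨ε, hε, hball⟩
    refine ⟨Metric.ball x ε, Metric.ball_mem_nhds x hε, max M (M - S (x + x)), ?_⟩
    intro y hy
    have hy' : 2 * x - y ∈ Metric.ball x ε := by
      rw [Metric.mem_ball] at hy ⊢
      rw [Real.dist_eq] at hy ⊢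
      have : |2 * x - y - x| = |y - x| := by rw [show 2*x - y - x = -(y - x) by ring, abs_neg]
      rw [this]; exact hy
    have hb1 : S y ≤ M := hM y (hball hy)
    have hb2 : S (2 * x - y) ≤ M := hM _ (hball hy')
    have hb3 : S (x + x) ≤ S y + S (2 * x - y) := by
      have h := hsub y (2 * x - y)
      rw [show y + (2 * x - y) = x + x from by ring] at h
      exact h
    rw [abs_le]
    constructor
    · have : -(M - S (x + x)) ≤ S y := by linarith
      have h2 : -(max M (M - S (x + x))) ≤ -(M - S (x + x)) :=
        neg_le_neg (le_max_right _ _)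
      linarith
    · exact le_trans hb1 (le_max_left _ _)
  · -- (iii)
    intro h
    obtain ⟨U, hU, M, hM⟩ := h 0
    rcases Metric.mem_nhds_iff.mp hU with ⟨δ, hδ, hball⟩
    have hM0 : 0 ≤ M := le_trans (abs_nonneg _) (hM 0 (hball (by simpa using hδ)))
    rw [le_liminf_iff]
    intro b hb
    rcases EReal.lt_iff_exists_real_btwn.mp hb with ⟨c, hbc, hc0⟩
    have hc0' : c < 0 := by exact_mod_cast hc0
    -- pick n with M / (n+1) < -c
    obtain ⟨n, hn⟩ := exists_nat_gt (M / (-c))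
    have hnpos : (0 : ℝ) < (n : ℝ) + 1 := by positivity
    have hkey : M < ((n : ℝ) + 1) * (-c) := by
      have hc' : (0:ℝ) < -c := by linarith
      rw [div_lt_iff₀ hc'] at hn
      nlinarith
    have hev : ∀ᶠ t in 𝓝[≠] (0 : ℝ), b < (S t : EReal) := by
      have hmem : ∀ᶠ t in 𝓝[≠] (0 : ℝ), t ∈ Metric.ball (0:ℝ) (δ / ((n:ℝ)+1)) := by
        apply eventually_nhdsWithin_of_eventually_nhds
        exact Metric.ball_mem_nhds 0 (by positivity)
      filter_upwards [hmem] with t ht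
      have htb : |t| < δ / ((n:ℝ)+1) := by
        simpa [Real.dist_eq] using ht
      have hnt : ((n:ℝ)+1) * t ∈ Metric.ball (0:ℝ) δ := by
        rw [Metric.mem_ball, Real.dist_eq, sub_zero, abs_mul,
          abs_of_pos hnpos]
        calc ((n:ℝ)+1) * |t| < ((n:ℝ)+1) * (δ / ((n:ℝ)+1)) := by
              exact mul_lt_mul_of_pos_left htb hnpos
          _ = δ := by field_simp
      have hbd : -M ≤ S (((n:ℝ)+1) * t) := by
        have := hM _ (hball hnt)
        have := abs_le.mp this
        linarith [this.1]
      have hsm : S (((n:ℝ)+1) * t) ≤ ((n:ℝ)+1) * S t := subadd_nsmul S hsub n t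
      have : c < S t := by nlinarith
      calc b < (c : EReal) := hbc
        _ < (S t : EReal) := by exact_mod_cast this
    exact hev
end

section
/- Proposition 8 (Automatic right-continuity): If S : ℝ → ℝ is subadditive, satisfies limsup_{u↓0} S(u) ≤ 0, and S(0) = 0, then S(0+) = 0, i.e. S(v) → 0 as v → 0 through positive values. -/
open Filter Topology

/-- Proposition 8 (Automatic right-continuity): a subadditive `S : ℝ → ℝ` with
`limsup_{u↓0} S(u) ≤ 0` and `S(0) = 0` satisfies `S(0+) = 0`. -/
theorem prop8 (S : ℝ → ℝ)
    (hsub : ∀ u v : ℝ, S (u + v) ≤ S u + S v)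
    (hlimsup : limsup (fun u => (S u : EReal)) (𝓝[>] (0 : ℝ)) ≤ 0)
    (h0 : S 0 = 0) :
    Tendsto S (𝓝[>] (0 : ℝ)) (𝓝 0) := by
  have hupper : ∀ ε : ℝ, 0 < ε → ∀ᶠ v in 𝓝[>] (0 : ℝ), S v < ε := by
    intro ε hε
    have h : limsup (fun u => (S u : EReal)) (𝓝[>] (0 : ℝ)) < (ε : EReal) := by
      refine lt_of_le_of_lt hlimsup ?_
      exact_mod_cast hε
    have h2 := Filter.eventually_lt_of_limsup_lt h
    filter_upwards [h2] with v hv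
    exact_mod_cast hv
  have hlower : ∀ ε : ℝ, 0 < ε → ∀ᶠ v in 𝓝[>] (0 : ℝ), -ε < S v := by
    intro ε hε
    by_contra hcon
    have hfreq : ∃ᶠ v in 𝓝[>] (0 : ℝ), S v ≤ -ε := by
      simpa [Filter.not_eventually, not_lt] using hcon
    have hfreq' := (nhdsGT_basis (0 : ℝ)).frequently_iff.mp hfreq
    obtain ⟨δ, hδ, hδ2⟩ := (nhdsGT_basis (0 : ℝ)).eventually_iff.mp (hupper ε hε)
    have key : ∀ n : ℕ, ∀ t ∈ Set.Ioo (0 : ℝ) δ, S t ≤ ε - n * ε := by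
      intro n
      induction n with
      | zero => intro t ht; simpa using (hδ2 ht).le
      | succ n ih =>
        intro t ht
        obtain ⟨v, hv, hSv⟩ := hfreq' t ht.1
        have htv : t - v ∈ Set.Ioo (0 : ℝ) δ :=
          ⟨by linarith [hv.2], by linarith [ht.2, hv.1]⟩
        have hst : S t ≤ S v + S (t - v) := by
          have := hsub v (t - v); simpa using this
        have ih' := ih (t - v) htv
        push_cast
        linarith
    have hmem : δ / 2 ∈ Set.Ioo (0 : ℝ) δ := ⟨half_pos hδ, half_lt_self hδ⟩
    obtain ⟨n, hn⟩ := exists_nat_gt ((ε - S (δ / 2)) / ε)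
    have h3 := key n (δ / 2) hmem
    have h4 : (n : ℝ) * ε > ε - S (δ / 2) := by
      have := (div_lt_iff₀ hε).mp hn; linarith
    linarith
  rw [Metric.tendsto_nhds]
  intro ε hε
  filter_upwards [hupper ε hε, hlower ε hε] with v h1 h2
  rw [Real.dist_eq, sub_zero, abs_lt]
  exact ⟨h2, h1⟩
end

section
/- Proposition 9(i) (measure case): Let S : ℝ → ℝ be subadditive and suppose there exist M ∈ ℝ and a sequence of Lebesgue-measurable sets P_n ⊆ (0, 1/n) of positive Lebesgue measure such that limsup_{n→∞} sup{S(x) : x ∈ P_n} ≤ M. Then S is WNT: for every convergent real sequence (u_n) there exist t ∈ ℝ, an infinite set 𝕄 ⊆ ℕ and k ∈ ℕ such that |S(t + u_m)| < k for all m ∈ 𝕄. -/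
open Filter Topology
open MeasureTheory
open scoped ENNReal

/-- `S` is WNT: for each convergent real sequence `(u_n)` there are `t ∈ ℝ`, an infinite
`𝕄 ⊆ ℕ` and `k ∈ ℕ` with `|S(t + u_m)| < k` for all `m ∈ 𝕄`. -/
def WNT (S : ℝ → ℝ) : Prop :=
  ∀ (u : ℕ → ℝ) (l : ℝ), Tendsto u atTop (𝓝 l) →
    ∃ (t : ℝ) (M : Set ℕ) (k : ℕ), M.Infinite ∧ ∀ m ∈ M, |S (t + u m)| < k

lemma shrink (A : Set ℝ) (hA : MeasurableSet A) (hfin : volume A ≠ ⊤)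
    {ε : ℝ≥0∞} (hε : ε ≠ 0) (hεtop : ε ≠ ⊤) :
    ∀ᶠ t in 𝓝 (0 : ℝ), volume (A \ ((fun a => a + t) ⁻¹' A)) < ε := by
  have hε2 : ε / 2 ≠ 0 := by simp [ENNReal.div_eq_zero_iff, hε]
  have hε4 : ε / 2 / 2 ≠ 0 := by simp [ENNReal.div_eq_zero_iff, hε2]
  obtain ⟨K, hKA, hKc, hK⟩ := hA.exists_isCompact_lt_add hfin hε4
  obtain ⟨U, hAU, hUo, hU⟩ := Set.exists_isOpen_lt_add A hfin hε4
  obtain ⟨δ, hδ, hth⟩ := hKc.exists_thickening_subset_open hUo (hKA.trans hAU)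
  filter_upwards [Metric.ball_mem_nhds (0:ℝ) hδ] with t ht
  rw [Metric.mem_ball, Real.dist_0_eq_abs] at ht
  have hKU : (fun a => a + t) ⁻¹' K ⊆ U := by
    intro a ha
    apply hth
    rw [Metric.mem_thickening_iff]
    exact ⟨a + t, ha, by rw [Real.dist_eq]; simpa using ht⟩
  have hpre : volume ((fun a => a + t) ⁻¹' K) = volume K :=
    measure_preimage_add_right volume t K
  calc volume (A \ ((fun a => a + t) ⁻¹' A))
      ≤ volume (U \ ((fun a => a + t) ⁻¹' K)) :=
        measure_mono (Set.diff_subset_diff hAU (Set.preimage_mono hKA))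
    _ = volume U - volume ((fun a => a + t) ⁻¹' K) :=
        measure_diff hKU ((hKc.measurableSet.preimage (measurable_add_const t)).nullMeasurableSet)
          (by rw [hpre]; exact hKc.measure_lt_top.ne)
    _ = volume U - volume K := by rw [hpre]
    _ ≤ ε / 2 := by
        rw [tsub_le_iff_right]
        have h1 : volume U < volume K + (ε/2/2 + ε/2/2) := by
          calc volume U < volume A + ε/2/2 := hU
            _ < (volume K + ε/2/2) + ε/2/2 := by
                exact ENNReal.add_lt_add_right ((ENNReal.div_lt_top ((ENNReal.div_lt_top hεtop two_ne_zero).ne) two_ne_zero).ne) hK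
            _ = volume K + (ε/2/2 + ε/2/2) := by rw [add_assoc]
        rw [ENNReal.add_halves] at h1
        rw [add_comm]
        exact h1.le
    _ < ε := ENNReal.half_lt_self hε hεtop

lemma kbd (A : Set ℝ) (hA : MeasurableSet A) (h0 : volume A ≠ 0) (hfin : volume A ≠ ⊤)
    (z : ℕ → ℝ) (hz : Tendsto z atTop (𝓝 0)) (J : Set ℕ) (hJ : J.Infinite) :
    ∃ x ∈ A, {n | n ∈ J ∧ x + z n ∈ A}.Infinite := by
  set c : ℝ≥0∞ := volume A / 2 / 2 with hc
  have hc0 : c ≠ 0 := by simp [hc, ENNReal.div_eq_zero_iff, h0]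
  have hctop : c ≠ ⊤ := by
    simp only [hc, ne_eq, ENNReal.div_eq_top]
    simp [hfin]
  have hsel : ∀ j : ℕ, ∃ n, n ∈ J ∧ j < n ∧
      volume (A \ ((fun a => a + z n) ⁻¹' A)) < c * 2⁻¹ ^ j := by
    intro j
    have h2ne : (2 : ℝ≥0∞)⁻¹ ≠ 0 := by simp
    have hε0 : c * 2⁻¹ ^ j ≠ 0 := mul_ne_zero hc0 (pow_ne_zero j h2ne)
    have hεtop : c * 2⁻¹ ^ j ≠ ⊤ :=
      ENNReal.mul_ne_top hctop (ENNReal.pow_ne_top (by simp))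
    have h1 := hz.eventually (shrink A hA hfin hε0 hεtop)
    have h2 : ∃ᶠ n in atTop, n ∈ J := Nat.frequently_atTop_iff_infinite.mpr hJ
    obtain ⟨n, hn1, hn2, hn3⟩ := (h2.and_eventually (h1.and (eventually_gt_atTop j))).exists
    exact ⟨n, hn1, hn3, hn2⟩
  choose m hmJ hmgt hmvol using hsel
  set D : ℕ → Set ℝ := fun j => A \ ((fun a => a + z (m j)) ⁻¹' A) with hD
  have hDm : volume (⋃ j, D j) < volume A := by
    calc volume (⋃ j, D j) ≤ ∑' j, volume (D j) := measure_iUnion_le _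
      _ ≤ ∑' j, c * 2⁻¹ ^ j := ENNReal.tsum_le_tsum fun j => (hmvol j).le
      _ = c * 2 := by
          rw [ENNReal.tsum_mul_left, ENNReal.tsum_geometric]
          congr 1
          rw [ENNReal.one_sub_inv_two, inv_inv]
      _ = volume A / 2 := by
          rw [hc]
          exact ENNReal.div_mul_cancel two_ne_zero ENNReal.ofNat_ne_top
      _ < volume A := ENNReal.half_lt_self h0 hfin
  have hne : (A \ ⋃ j, D j).Nonempty := by
    by_contra h
    rw [Set.not_nonempty_iff_eq_empty, Set.diff_eq_empty] at h
    exact absurd (measure_mono h) (not_le.mpr hDm)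
  obtain ⟨x, hxA, hxD⟩ := hne
  refine ⟨x, hxA, ?_⟩
  have hx : ∀ j, x + z (m j) ∈ A := by
    intro j
    by_contra hcon
    exact hxD (Set.mem_iUnion.mpr ⟨j, hxA, hcon⟩)
  intro hT
  obtain ⟨N, hN⟩ := hT.bddAbove
  have : m N ∈ {n | n ∈ J ∧ x + z n ∈ A} := ⟨hmJ N, hx N⟩
  exact absurd (hN this) (not_le.mpr (hmgt N))

/-- Proposition 9(i), measure case: a subadditive `S` satisfying the `(L)-limsup_M`
condition on a sequence of positive-measure sets `P_n ⊆ (0, 1/n)` is WNT. -/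
theorem prop9i (S : ℝ → ℝ) (hsub : ∀ u v : ℝ, S (u + v) ≤ S u + S v)
    (M : ℝ) (P : ℕ → Set ℝ)
    (hP : ∀ n : ℕ, P n ⊆ Set.Ioo (0 : ℝ) (1 / ((n : ℝ) + 1)))
    (hmeas : ∀ n, MeasurableSet (P n))
    (hpos : ∀ n, 0 < MeasureTheory.volume (P n))
    (hlim : limsup (fun n => sSup ((fun x => (S x : EReal)) '' P n)) atTop ≤ (M : EReal)) :
    WNT S := by
  intro u l hu
  have hMM : (M : EReal) < ((M + 1 : ℝ) : EReal) := by exact_mod_cast lt_add_one M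
  obtain ⟨n0, hn0⟩ := (Filter.eventually_lt_of_limsup_lt (lt_of_le_of_lt hlim hMM)).exists
  have hbound : ∀ w ∈ P n0, S w ≤ M + 1 := by
    intro w hw
    have h1 : ((S w : ℝ) : EReal) ≤ sSup ((fun x => (S x : EReal)) '' P n0) :=
      le_sSup ⟨w, hw, rfl⟩
    have h2 := lt_of_le_of_lt h1 hn0
    exact_mod_cast h2.le
  set A := P n0 with hAdef
  have hfin : volume A ≠ ⊤ := by
    refine ne_top_of_le_ne_top ?_ (measure_mono (hP n0))
    simp [Real.volume_Ioo]
  have h0 : volume A ≠ 0 := (hpos n0).ne'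
  have hz : Tendsto (fun m => u m - l) atTop (𝓝 0) := by
    simpa using hu.sub_const l
  obtain ⟨x, hxA, hJ1⟩ := kbd A (hmeas n0) h0 hfin (fun m => u m - l) hz
    Set.univ Set.infinite_univ
  obtain ⟨y, hyA, hJ2⟩ := kbd A (hmeas n0) h0 hfin (fun m => -(u m - l))
    (by simpa using hz.neg) _ hJ1
  have hS0 : 0 ≤ S 0 := by have h := hsub 0 0; rw [add_zero] at h; linarith
  set B : ℝ := |M| + 1 + |S (-(x + y))| with hB
  refine ⟨x - l, _, ⌈B⌉₊ + 1, hJ2, ?_⟩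
  intro n hn
  obtain ⟨⟨_, hxm⟩, hym⟩ := hn
  have hup : S (x + (u n - l)) ≤ M + 1 := hbound _ hxm
  have hup2 : S (y + -(u n - l)) ≤ M + 1 := hbound _ hym
  have hneg : S (-(x + (u n - l))) ≤ S (y + -(u n - l)) + S (-(x + y)) := by
    have h := hsub (y + -(u n - l)) (-(x + y))
    rw [show (y + -(u n - l)) + (-(x + y)) = -(x + (u n - l)) by ring] at h
    exact h
  have hlow : -(S (y + -(u n - l)) + S (-(x + y))) ≤ S (x + (u n - l)) := by
    have h := hsub (x + (u n - l)) (-(x + (u n - l)))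
    rw [add_neg_cancel] at h
    linarith
  have heq : x - l + u n = x + (u n - l) := by ring
  rw [heq]
  have habs : |S (x + (u n - l))| ≤ B := by
    rw [abs_le, hB]
    constructor
    · linarith [le_abs_self M, le_abs_self (S (-(x + y))), hup2, hlow]
    · linarith [le_abs_self M, abs_nonneg (S (-(x + y))), hup]
  have : B < ((⌈B⌉₊ + 1 : ℕ) : ℝ) := by
    push_cast
    have := Nat.le_ceil B
    linarith
  exact lt_of_le_of_lt habs this
end

section
/- Proposition 7′: If S : ℝ → ℝ is subadditive and WNT, then S is locally bounded above: every point of ℝ has a neighbourhood on which S is bounded above. -/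
open Filter Topology

/-- Proposition 7′: a subadditive WNT function is locally bounded above. -/
theorem prop7' (S : ℝ → ℝ) (hsub : ∀ u v : ℝ, S (u + v) ≤ S u + S v)
    (hwnt : WNT S) :
    ∀ x : ℝ, ∃ U ∈ 𝓝 x, ∃ M : ℝ, ∀ y ∈ U, S y ≤ M := by
  intro x
  by_contra h
  push_neg at h
  have hy : ∀ n : ℕ, ∃ y : ℝ, dist y x < 1 / (n + 1) ∧ (n : ℝ) < S y := by
    intro n
    obtain ⟨y, hyU, hyS⟩ := h (Metric.ball x (1 / (n + 1)))
      (Metric.ball_mem_nhds x (by positivity)) n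
    exact ⟨y, by simpa [Metric.mem_ball] using hyU, hyS⟩
  choose y hy1 hy2 using hy
  have hconv : Tendsto y atTop (𝓝 x) := by
    rw [tendsto_iff_dist_tendsto_zero]
    exact squeeze_zero (fun n => dist_nonneg) (fun n => (hy1 n).le)
      tendsto_one_div_add_atTop_nhds_zero_nat
  obtain ⟨t, M, k, hMinf, hk⟩ := hwnt y x hconv
  obtain ⟨m, hmM, hmgt⟩ := hMinf.exists_gt (k + Nat.ceil |S (-t)|)
  have h1 : S (y m) ≤ S (t + y m) + S (-t) := by
    have := hsub (t + y m) (-t)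
    have e : t + y m + -t = y m := by ring
    rwa [e] at this
  have h2 : S (t + y m) < k := (abs_lt.mp (hk m hmM)).2
  have h3 : S (-t) ≤ |S (-t)| := le_abs_self _
  have h4 : |S (-t)| ≤ (Nat.ceil |S (-t)| : ℝ) := Nat.le_ceil _
  have h5 : (m : ℝ) < S (y m) := hy2 m
  have h6 : ((k + Nat.ceil |S (-t)| : ℕ) : ℝ) < (m : ℝ) := by exact_mod_cast hmgt
  push_cast at h6
  linarith
end

section
/- Proposition 8′: Let S : ℝ → ℝ be subadditive with S(0) = 0, and suppose there is a sequence of symmetric shift-compact sets Q_n ⊆ (−1/n, 1/n) with limsup_{n→∞} sup{S(x) : x ∈ Q_n} ≤ 0. Then S(0+) = 0, i.e. S(v) → S(0) = 0 as v → 0 through positive values. -/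
open Filter Topology

/-- `Q` is shift-compact: for each null sequence `(z_n)` there are `t ∈ Q` and an infinite
`𝕄 ⊆ ℕ` with `t + z_m ∈ Q` for all `m ∈ 𝕄`. -/
def ShiftCompact (Q : Set ℝ) : Prop :=
  ∀ z : ℕ → ℝ, Tendsto z atTop (𝓝 0) →
    ∃ t ∈ Q, ∃ M : Set ℕ, M.Infinite ∧ ∀ m ∈ M, t + z m ∈ Q

lemma key_lemma (S : ℝ → ℝ)
    (hsub : ∀ u v : ℝ, S (u + v) ≤ S u + S v)
    (Qn : Set ℝ) (hsym : -Qn = Qn) (hsc : ShiftCompact Qn)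
    (ε : ℝ) (hε : ∀ x ∈ Qn, S x ≤ ε)
    (z : ℕ → ℝ) (hz : Tendsto z atTop (𝓝 0)) :
    ∀ᶠ m in atTop, S (z m) ≤ 2 * ε := by
  by_contra h
  have hfreq : ∃ᶠ m in atTop, 2 * ε < S (z m) :=
    Filter.frequently_atTop.mpr (by simpa [not_eventually, not_le] using h)
  obtain ⟨φ, hφ, hP⟩ := Filter.extraction_of_frequently_atTop hfreq
  have hz' : Tendsto (fun k => z (φ k)) atTop (𝓝 0) :=
    hz.comp hφ.tendsto_atTop
  obtain ⟨t, ht, M, hMinf, hM⟩ := hsc _ hz'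
  obtain ⟨m, hm⟩ := hMinf.nonempty
  have h1 : S (t + z (φ m)) ≤ ε := hε _ (hM m hm)
  have h2 : S (-t) ≤ ε := by
    apply hε
    rw [← hsym]
    exact Set.neg_mem_neg.mpr ht
  have h3 : S (z (φ m)) ≤ S (t + z (φ m)) + S (-t) := by
    have := hsub (t + z (φ m)) (-t)
    have he : t + z (φ m) + -t = z (φ m) := by ring
    rwa [he] at this
  have : 2 * ε < 2 * ε := lt_of_lt_of_le (hP m) (by linarith)
  exact absurd this (lt_irrefl _)

/-- Proposition 8′: a subadditive `S` with `S(0) = 0` satisfying the `(SS)-limsup_0`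
condition on symmetric shift-compact sets `Q_n ⊆ (−1/n, 1/n)` has `S(0+) = 0`. -/
theorem prop8' (S : ℝ → ℝ)
    (hsub : ∀ u v : ℝ, S (u + v) ≤ S u + S v)
    (h0 : S 0 = 0) (Q : ℕ → Set ℝ)
    (hQ : ∀ n : ℕ, Q n ⊆ Set.Ioo (-(1 / ((n : ℝ) + 1))) (1 / ((n : ℝ) + 1)))
    (hsym : ∀ n, -Q n = Q n)
    (hsc : ∀ n, ShiftCompact (Q n))
    (hlim : limsup (fun n => sSup ((fun x => (S x : EReal)) '' Q n)) atTop ≤ 0) :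
    Tendsto S (𝓝[>] (0 : ℝ)) (𝓝 0) := by
  rw [tendsto_iff_seq_tendsto]
  intro u hu
  have hu0 : Tendsto u atTop (𝓝 0) := hu.mono_right nhdsWithin_le_nhds
  rw [Metric.tendsto_atTop]
  intro ε hε
  -- find n with S ≤ ε/4 on Q n
  have hεq : (0 : EReal) < ((ε / 4 : ℝ) : EReal) := by
    exact_mod_cast (by linarith : (0:ℝ) < ε / 4)
  have hev : ∀ᶠ n in atTop,
      sSup ((fun x => (S x : EReal)) '' Q n) < ((ε / 4 : ℝ) : EReal) :=
    Filter.eventually_lt_of_limsup_lt (lt_of_le_of_lt hlim hεq)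
  obtain ⟨n, hn⟩ := hev.exists
  have hQn : ∀ x ∈ Q n, S x ≤ ε / 4 := by
    intro x hx
    have : (S x : EReal) ≤ sSup ((fun x => (S x : EReal)) '' Q n) :=
      le_sSup ⟨x, hx, rfl⟩
    have := lt_of_le_of_lt this hn
    exact_mod_cast this.le
  have hup : ∀ᶠ m in atTop, S (u m) ≤ 2 * (ε / 4) :=
    key_lemma S hsub (Q n) (hsym n) (hsc n) (ε / 4) hQn u hu0
  have hdn : ∀ᶠ m in atTop, S (-(u m)) ≤ 2 * (ε / 4) :=
    key_lemma S hsub (Q n) (hsym n) (hsc n) (ε / 4) hQn (fun m => -(u m))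
      (by simpa using hu0.neg)
  have hall : ∀ᶠ m in atTop, dist (S (u m)) 0 < ε := by
    filter_upwards [hup, hdn] with m h1 h2
    have hlow : 0 ≤ S (u m) + S (-(u m)) := by
      have := hsub (u m) (-(u m))
      simpa [h0] using this
    rw [Real.dist_eq, sub_zero, abs_lt]
    constructor <;> linarith
  exact (hall.and (Filter.eventually_atTop.2 ⟨0, fun _ _ => trivial⟩)).exists_forall_of_atTop
    |>.imp (fun N h => fun m hm => (h m hm).1)
end

section
/- Theorem 1′ (Strong quantifier weakening): Let S : ℝ → ℝ ∪ {±∞} be subadditive and let 𝔸 ⊆ ℝ be an additive subgroup such that (i) 𝔸 is dense in ℝ; (ii) S restricted to 𝔸 is finite (real-valued) and additive; (iii) S is WNT* on 𝔸. Then 𝔸 = ℝ and S is linear: there exists c ∈ ℝ such that S(u) = cu for all u ∈ ℝ. -/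
open Filter Topology

/-- `S` is WNT* on `Σ`: for each convergent real sequence `(u_n)` there are `t ∈ Σ`, an
infinite `𝕄 ⊆ ℕ` and `k ∈ ℕ` such that `t + u_m ∈ Σ` and `|S(t + u_m)| < k` for `m ∈ 𝕄`. -/
def WNTstar (S : ℝ → EReal) (Sig : Set ℝ) : Prop :=
  ∀ (u : ℕ → ℝ) (l : ℝ), Tendsto u atTop (𝓝 l) →
    ∃ t ∈ Sig, ∃ (M : Set ℕ) (k : ℕ), M.Infinite ∧
      ∀ m ∈ M, t + u m ∈ Sig ∧
        -((k : ℝ) : EReal) < S (t + u m) ∧ S (t + u m) < ((k : ℝ) : EReal)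

/-- Theorem 1′ (Strong quantifier weakening): a subadditive extended-real-valued `S`,
finite and additive on a dense additive subgroup `A`, WNT* on `A`, forces `A = ℝ` and
`S` linear. -/
theorem theorem1' (S : ℝ → EReal) (A : AddSubgroup ℝ)
    (hsub : ∀ u v : ℝ, S (u + v) ≤ S u + S v)
    (hdense : Dense (A : Set ℝ))
    (hfin : ∀ a ∈ A, ∃ r : ℝ, S a = (r : EReal))
    (hadd : ∀ a ∈ A, ∀ b ∈ A, S (a + b) = S a + S b)
    (hwnt : WNTstar S (A : Set ℝ)) :
    (A : Set ℝ) = Set.univ ∧ ∃ c : ℝ, ∀ u : ℝ, S u = ((c * u : ℝ) : EReal) := by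
    -- Step 1: A = ℝ
  have huniv : (A : Set ℝ) = Set.univ := by
    ext u
    simp only [Set.mem_univ, iff_true]
    obtain ⟨a, ha, hlim⟩ := mem_closure_iff_seq_limit.1 (hdense u)
    have hten : Tendsto (fun n => u - a n) atTop (𝓝 0) := by
      simpa using hlim.const_sub u
    obtain ⟨t, ht, M, k, hM, h⟩ := hwnt (fun n => u - a n) 0 hten
    obtain ⟨m, hm⟩ := hM.nonempty
    have h1 : t + (u - a m) ∈ A := (h m hm).1
    have : (t + (u - a m)) - t + a m ∈ A := A.add_mem (A.sub_mem h1 ht) (ha m)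
    simpa using this
  have hmem : ∀ x : ℝ, x ∈ A := fun x => by
    have : x ∈ (A : Set ℝ) := by rw [huniv]; trivial
    exact this
  -- Step 2: extract f
  have hfin' : ∀ x : ℝ, ∃ r : ℝ, S x = (r : EReal) := fun x => hfin x (hmem x)
  set f : ℝ → ℝ := fun x => (hfin' x).choose with hf_def
  have hS : ∀ x : ℝ, S x = ((f x : ℝ) : EReal) := fun x => (hfin' x).choose_spec
  have hfadd : ∀ u v : ℝ, f (u + v) = f u + f v := by
    intro u v
    have := hadd u (hmem u) v (hmem v)
    rw [hS, hS, hS] at this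
    exact_mod_cast this
  set F : ℝ →+ ℝ := AddMonoidHom.mk' f hfadd with hF_def
  have hFval : ∀ x : ℝ, F x = f x := fun _ => rfl
  set c : ℝ := F 1 with hc_def
  -- Step 3: F is linear
  have hlin : ∀ x : ℝ, F x = c * x := by
    intro x
    by_contra hne
    set d : ℝ := F x - c * x with hd_def
    have hd : d ≠ 0 := sub_ne_zero.2 hne
    -- rational approximations
    have hbtwn : ∀ n : ℕ, ∃ q : ℚ, (n : ℝ) * x - 1 / ((n : ℝ) + 1) < q ∧ (q : ℝ) < (n : ℝ) * x := by
      intro n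
      apply exists_rat_btwn
      have : (0:ℝ) < 1 / ((n:ℝ) + 1) := by positivity
      linarith
    choose q hq1 hq2 using hbtwn
    set u : ℕ → ℝ := fun n => (n : ℝ) * x - (q n : ℝ) with hu_def
    have hu_pos : ∀ n, 0 < u n := fun n => sub_pos.2 (hq2 n)
    have hu_lt : ∀ n, u n < 1 / ((n:ℝ) + 1) := fun n => by
      have := hq1 n; simp only [hu_def]; linarith
    have hu0 : Tendsto u atTop (𝓝 0) := by
      apply squeeze_zero (fun n => (hu_pos n).le) (fun n => (hu_lt n).le)
      exact tendsto_one_div_add_atTop_nhds_zero_nat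
    obtain ⟨t, ht, M, k, hM, h⟩ := hwnt u 0 hu0
    -- value of F on t + u m
    have hFq : ∀ n : ℕ, F ((q n : ℝ)) = (q n : ℝ) * c := by
      intro n
      have := map_ratCast_smul F ℝ ℝ (q n) (1:ℝ)
      simpa [Rat.smul_def, hc_def] using this
    have hFnx : ∀ n : ℕ, F ((n : ℝ) * x) = (n : ℝ) * F x := by
      intro n
      have : (n : ℝ) * x = n • x := by simp [nsmul_eq_mul]
      rw [this, map_nsmul, nsmul_eq_mul]
    have key : ∀ n : ℕ, F (t + u n) = F t + (n : ℝ) * d + c * u n := by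
      intro n
      have hx : F x = c * x + d := by rw [hd_def]; ring
      rw [map_add, hu_def]
      simp only [map_sub, hFq, hFnx, hx]
      ring
    -- bound
    obtain ⟨N, hN⟩ := exists_nat_gt ((|F t| + k + |c|) / |d|)
    obtain ⟨m, hmM, hm⟩ := hM.exists_gt N
    obtain ⟨-, hlt1, hlt2⟩ := h m hmM
    rw [hS] at hlt1 hlt2
    have habs : |F (t + u m)| < k := by
      rw [abs_lt]
      constructor
      · exact_mod_cast hlt1
      · exact_mod_cast hlt2
    have hum1 : |u m| ≤ 1 := by
      rw [abs_of_pos (hu_pos m)]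
      have := hu_lt m
      have h2 : 1 / ((m:ℝ) + 1) ≤ 1 := by
        rw [div_le_one (by positivity)]
        have : (0:ℝ) ≤ (m:ℝ) := Nat.cast_nonneg m
        linarith
      exact (hu_lt m).le.trans h2
    have hmd : (m : ℝ) * |d| = |(m:ℝ) * d| := by
      rw [abs_mul, abs_of_nonneg (Nat.cast_nonneg m : (0:ℝ) ≤ m)]
    have hbound : (m : ℝ) * |d| ≤ |F (t + u m)| + |F t| + |c| := by
      rw [hmd]
      have : (m:ℝ) * d = F (t + u m) - F t - c * u m := by rw [key]; ring
      rw [this]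
      calc |F (t + u m) - F t - c * u m| ≤ |F (t + u m)| + |F t| + |c * u m| := by
            have h1 := abs_sub (F (t + u m) - F t) (c * u m)
            have h2 := abs_sub (F (t + u m)) (F t)
            calc |F (t + u m) - F t - c * u m| ≤ |F (t + u m) - F t| + |c * u m| :=
                  abs_sub _ _
              _ ≤ |F (t + u m)| + |F t| + |c * u m| := by linarith
        _ ≤ |F (t + u m)| + |F t| + |c| := by
            have : |c * u m| ≤ |c| := by
              rw [abs_mul]
              calc |c| * |u m| ≤ |c| * 1 := by
                    exact mul_le_mul_of_nonneg_left hum1 (abs_nonneg c)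
                _ = |c| := mul_one _
            linarith
    have hNm : ((|F t| + k + |c|) / |d|) < (m : ℝ) := lt_trans hN (by exact_mod_cast hm)
    have hd' : (0:ℝ) < |d| := abs_pos.2 hd
    have : |F t| + k + |c| < (m:ℝ) * |d| := by
      rwa [div_lt_iff₀ hd'] at hNm
    linarith
  exact ⟨huniv, c, fun x => by rw [hS x, ← hFval x, hlin x]⟩
end

section
/- Proposition 11: If T ⊆ ℝ is a symmetric analytic set that spans ℝ as a vector space over ℚ, then there exists k ∈ ℕ such that the k-fold sumset k·T := T + T + ⋯ + T (k summands) contains the open interval (−1, 1). -/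
open Filter Topology

section Aux

open MeasureTheory Set Pointwise

/-- Capacitability-style lemma: an analytic subset of `ℝ` of positive Lebesgue outer measure
contains a compact subset of positive measure. -/
theorem analyticSet_exists_isCompact_subset {A : Set ℝ}
    (hA : MeasureTheory.AnalyticSet A) (hpos : volume A ≠ 0) :
    ∃ K, K ⊆ A ∧ IsCompact K ∧ volume K ≠ 0 := by
  obtain ⟨c, hc0, hcA⟩ : ∃ c, 0 < c ∧ c < volume A :=
    exists_between (pos_iff_ne_zero.2 hpos)
  rw [MeasureTheory.AnalyticSet] at hA
  rcases hA with rfl | ⟨f, hf, rfl⟩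
  · simp at hpos
  have base : c < volume (f '' {x : ℕ → ℕ | ∀ i : Fin 0, x (i : ℕ) ≤ (fun j => Fin.elim0 j) i}) := by
    have h0 : {x : ℕ → ℕ | ∀ i : Fin 0, x (i : ℕ) ≤ (fun j => Fin.elim0 j) i} = Set.univ :=
      Set.eq_univ_of_forall fun x i => i.elim0
    rw [h0, Set.image_univ]
    exact hcA
  have step : ∀ (k : ℕ) (v : Fin k → ℕ),
      c < volume (f '' {x : ℕ → ℕ | ∀ i : Fin k, x (i : ℕ) ≤ v i}) →
      ∃ a : ℕ, c < volume (f '' {x : ℕ → ℕ |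
        ∀ i : Fin (k + 1), x (i : ℕ) ≤ (Fin.snoc v a : Fin (k + 1) → ℕ) i}) := by
    intro k v hv
    have hmono : Monotone (fun a : ℕ =>
        f '' {x : ℕ → ℕ | (∀ i : Fin k, x (i : ℕ) ≤ v i) ∧ x k ≤ a}) := by
      intro a b hab
      exact Set.image_mono (fun x hx => ⟨hx.1, hx.2.trans hab⟩)
    have hunion : (⋃ a : ℕ, f '' {x : ℕ → ℕ | (∀ i : Fin k, x (i : ℕ) ≤ v i) ∧ x k ≤ a})
        = f '' {x : ℕ → ℕ | ∀ i : Fin k, x (i : ℕ) ≤ v i} := by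
      have hsets : (⋃ a : ℕ, {x : ℕ → ℕ | (∀ i : Fin k, x (i : ℕ) ≤ v i) ∧ x k ≤ a})
          = {x : ℕ → ℕ | ∀ i : Fin k, x (i : ℕ) ≤ v i} := by
        ext x
        simp only [Set.mem_iUnion, Set.mem_setOf_eq]
        constructor
        · rintro ⟨a, h1, _⟩; exact h1
        · intro h; exact ⟨x k, h, le_rfl⟩
      rw [← Set.image_iUnion, hsets]
    have hlt : c < ⨆ a : ℕ, volume
        (f '' {x : ℕ → ℕ | (∀ i : Fin k, x (i : ℕ) ≤ v i) ∧ x k ≤ a}) := by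
      rw [← hmono.measure_iUnion, hunion]; exact hv
    obtain ⟨a, ha⟩ := lt_iSup_iff.1 hlt
    refine ⟨a, ?_⟩
    have hset : {x : ℕ → ℕ | ∀ i : Fin (k + 1), x (i : ℕ) ≤ (Fin.snoc v a : Fin (k + 1) → ℕ) i}
        = {x : ℕ → ℕ | (∀ i : Fin k, x (i : ℕ) ≤ v i) ∧ x k ≤ a} := by
      ext x
      simp only [Set.mem_setOf_eq]
      constructor
      · intro h
        refine ⟨fun i => ?_, ?_⟩
        · have := h i.castSucc
          simpa [Fin.snoc_castSucc] using this
        · have := h (Fin.last k)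
          simpa [Fin.snoc_last] using this
      · rintro ⟨h1, h2⟩ i
        induction i using Fin.lastCases with
        | last => simpa [Fin.snoc_last] using h2
        | cast j => simpa [Fin.snoc_castSucc] using h1 j
    rw [hset]
    exact ha
  let V : ∀ k : ℕ, {v : Fin k → ℕ //
      c < volume (f '' {x : ℕ → ℕ | ∀ i : Fin k, x (i : ℕ) ≤ v i})} := fun k =>
    Nat.rec ⟨fun j => Fin.elim0 j, base⟩
      (fun k p => ⟨Fin.snoc p.1 (step k p.1 p.2).choose, (step k p.1 p.2).choose_spec⟩) k
  let g : ℕ → ℕ := fun i => (V (i + 1)).1 (Fin.last i)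
  have hVg : ∀ (k : ℕ) (i : Fin k), (V k).1 i = g (i : ℕ) := by
    intro k
    induction k with
    | zero => exact fun i => i.elim0
    | succ k ih =>
      intro i
      induction i using Fin.lastCases with
      | last => rfl
      | cast j =>
        have h1 : (V (k + 1)).1 j.castSucc = (V k).1 j := by
          show (Fin.snoc (V k).1 _ : Fin (k + 1) → ℕ) j.castSucc = (V k).1 j
          rw [Fin.snoc_castSucc]
        rw [h1, ih j, Fin.coe_castSucc]
  have hQg : ∀ k : ℕ, c < volume (f '' {x : ℕ → ℕ | ∀ i : Fin k, x (i : ℕ) ≤ g i}) := by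
    intro k
    have h2 := (V k).2
    have hset : {x : ℕ → ℕ | ∀ i : Fin k, x (i : ℕ) ≤ (V k).1 i}
        = {x : ℕ → ℕ | ∀ i : Fin k, x (i : ℕ) ≤ g (i : ℕ)} :=
      Set.ext fun x => forall_congr' fun i => by rw [hVg k i]
    rwa [hset] at h2
  have hK0c : IsCompact {x : ℕ → ℕ | ∀ i : ℕ, x i ≤ g i} := by
    have h0 : {x : ℕ → ℕ | ∀ i : ℕ, x i ≤ g i} = Set.univ.pi (fun i => Set.Iic (g i)) := by
      ext x
      simp only [Set.mem_setOf_eq, Set.mem_univ_pi, Set.mem_Iic]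
    rw [h0]
    exact isCompact_univ_pi fun i => (Set.finite_Iic (g i)).isCompact
  refine ⟨f '' {x : ℕ → ℕ | ∀ i : ℕ, x i ≤ g i}, Set.image_subset_range f _, hK0c.image hf, ?_⟩
  have hcle : c ≤ volume (f '' {x : ℕ → ℕ | ∀ i : ℕ, x i ≤ g i}) := by
    by_contra hlt
    push_neg at hlt
    obtain ⟨U, hKU, hUopen, hUlt⟩ :=
      Set.exists_isOpen_lt_of_lt (f '' {x : ℕ → ℕ | ∀ i : ℕ, x i ≤ g i}) c hlt
    have hclaim : ∃ k : ℕ, f '' {x : ℕ → ℕ | ∀ i : Fin k, x (i : ℕ) ≤ g i} ⊆ U := by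
      by_contra hcl
      push_neg at hcl
      have hex : ∀ k : ℕ, ∃ x : ℕ → ℕ, (∀ i : Fin k, x (i : ℕ) ≤ g i) ∧ f x ∉ U := by
        intro k
        obtain ⟨y, hy, hyU⟩ := Set.not_subset.1 (hcl k)
        obtain ⟨x, hx, rfl⟩ := hy
        exact ⟨x, hx, hyU⟩
      choose x hx hxU using hex
      have hle : (↑(Ultrafilter.of (atTop : Filter ℕ)) : Filter ℕ) ≤ atTop :=
        Ultrafilter.of_le _
      have hpt : ∀ i : ℕ, ∃ a : ℕ, a ≤ g i ∧
          ((Ultrafilter.of (atTop : Filter ℕ)).map fun k => x k i) = pure a := by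
        intro i
        have hmem : Set.Iic (g i) ∈ (Ultrafilter.of (atTop : Filter ℕ)).map fun k => x k i := by
          have h1 : {k : ℕ | x k i ≤ g i} ∈ (atTop : Filter ℕ) := by
            filter_upwards [Filter.eventually_ge_atTop (i + 1)] with k hk
            exact hx k ⟨i, hk⟩
          exact hle h1
        obtain ⟨a, ha, hpa⟩ := Ultrafilter.eq_pure_of_finite_mem (Set.finite_Iic _) hmem
        exact ⟨a, ha, hpa⟩
      choose y hy hpure using hpt
      have htend : Filter.Tendsto (fun k => x k)
          (↑(Ultrafilter.of (atTop : Filter ℕ)) : Filter ℕ) (𝓝 y) := by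
        rw [tendsto_pi_nhds]
        intro i
        have hm : (Filter.map (fun k => x k i) (↑(Ultrafilter.of (atTop : Filter ℕ)) : Filter ℕ))
            = pure (y i) := by
          rw [← Ultrafilter.coe_map, hpure i]
          rfl
        rw [Filter.Tendsto, hm]
        exact pure_le_nhds _
      have htend2 : Filter.Tendsto (fun k => f (x k))
          (↑(Ultrafilter.of (atTop : Filter ℕ)) : Filter ℕ) (𝓝 (f y)) :=
        (hf.tendsto y).comp htend
      have hfyU : f y ∉ U :=
        hUopen.isClosed_compl.mem_of_tendsto htend2 (Filter.Eventually.of_forall hxU)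
      exact hfyU (hKU ⟨y, fun i => hy i, rfl⟩)
    obtain ⟨k, hk⟩ := hclaim
    exact absurd (lt_trans (lt_of_lt_of_le (hQg k) (measure_mono hk)) hUlt) (lt_irrefl c)
  exact (lt_of_lt_of_le hc0 hcle).ne'

variable (T : Set ℝ)

/-- The `k`-fold sumset of `T` (with `iterSum T 0 = {0}`). -/
def iterSum : ℕ → Set ℝ
  | 0 => {0}
  | (k + 1) => iterSum k + T

theorem mem_iterSum_iff : ∀ (k : ℕ) (x : ℝ),
    x ∈ iterSum T k ↔ ∃ v : Fin k → ℝ, (∀ i, v i ∈ T) ∧ ∑ i, v i = x := by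
  intro k
  induction k with
  | zero =>
    intro x
    simp only [iterSum, Set.mem_singleton_iff]
    constructor
    · rintro rfl; exact ⟨fun i => i.elim0, fun i => i.elim0, by simp⟩
    · rintro ⟨v, _, rfl⟩; simp
  | succ k ih =>
    intro x
    show x ∈ iterSum T k + T ↔ _
    rw [Set.mem_add]
    constructor
    · rintro ⟨y, hy, t, ht, rfl⟩
      obtain ⟨v, hv, rfl⟩ := (ih y).1 hy
      refine ⟨Fin.snoc v t, ?_, ?_⟩
      · intro i
        induction i using Fin.lastCases with
        | last => simpa [Fin.snoc_last] using ht
        | cast j => simpa [Fin.snoc_castSucc] using hv j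
      · rw [Fin.sum_univ_castSucc]
        simp [Fin.snoc_castSucc, Fin.snoc_last]
    · rintro ⟨v, hv, rfl⟩
      refine ⟨∑ i : Fin k, v i.castSucc, (ih _).2 ⟨fun i => v i.castSucc, fun i => hv _, rfl⟩,
        v (Fin.last k), hv _, ?_⟩
      rw [Fin.sum_univ_castSucc]

variable {T}

theorem iterSum_add {a b : ℝ} {m n : ℕ} (ha : a ∈ iterSum T m) (hb : b ∈ iterSum T n) :
    a + b ∈ iterSum T (m + n) := by
  induction n generalizing b with
  | zero =>
    obtain rfl : b = 0 := hb
    simpa using ha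
  | succ n ih =>
    obtain ⟨y, hy, t, ht, rfl⟩ := Set.mem_add.1 hb
    have : a + (y + t) = (a + y) + t := by ring
    rw [this]
    exact Set.add_mem_add (ih hy) ht

theorem iterSum_neg (hsym : -T = T) {a : ℝ} {k : ℕ} (ha : a ∈ iterSum T k) :
    -a ∈ iterSum T k := by
  induction k generalizing a with
  | zero =>
    obtain rfl : a = 0 := ha
    simp [iterSum]
  | succ k ih =>
    obtain ⟨y, hy, t, ht, rfl⟩ := Set.mem_add.1 ha
    have h1 : -(y + t) = -y + -t := by ring
    rw [h1]
    have h2 : -t ∈ T := by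
      rw [← hsym]; exact Set.neg_mem_neg.2 ht
    exact Set.add_mem_add (ih hy) h2

theorem iterSum_nsmul {a : ℝ} {k : ℕ} (ha : a ∈ iterSum T k) (n : ℕ) :
    (n : ℝ) * a ∈ iterSum T (n * k) := by
  induction n with
  | zero => simp [iterSum]
  | succ n ih =>
    have h1 : ((n + 1 : ℕ) : ℝ) * a = (n : ℝ) * a + a := by push_cast; ring
    have h2 : (n + 1) * k = n * k + k := by ring
    rw [h1, h2]
    exact iterSum_add ih ha

theorem iterSum_zsmul (hsym : -T = T) {a : ℝ} {k : ℕ} (ha : a ∈ iterSum T k) (z : ℤ) :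
    (z : ℝ) * a ∈ iterSum T (z.natAbs * k) := by
  obtain ⟨n, rfl | rfl⟩ := z.eq_nat_or_neg
  · simpa using iterSum_nsmul ha n
  · have h1 : ((-(n : ℤ) : ℤ) : ℝ) * a = -((n : ℝ) * a) := by push_cast; ring
    rw [h1]
    have h2 : (-(n : ℤ)).natAbs = n := by simp
    rw [h2]
    exact iterSum_neg hsym (iterSum_nsmul ha n)

theorem iterSum_analytic (hanal : MeasureTheory.AnalyticSet T) (k : ℕ) :
    MeasureTheory.AnalyticSet (iterSum T k) := by
  induction k with
  | zero => exact (measurableSet_singleton (0 : ℝ)).analyticSet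
  | succ k ih =>
    show MeasureTheory.AnalyticSet (iterSum T k + T)
    have h1 : MeasureTheory.AnalyticSet ((Prod.fst : ℝ × ℝ → ℝ) ⁻¹' (iterSum T k)) :=
      ih.preimage continuous_fst
    have h2 : MeasureTheory.AnalyticSet ((Prod.snd : ℝ × ℝ → ℝ) ⁻¹' T) :=
      hanal.preimage continuous_snd
    have h3 : MeasureTheory.AnalyticSet ((iterSum T k) ×ˢ T) := by
      rw [Set.prod_eq, Set.inter_eq_iInter]
      exact MeasureTheory.AnalyticSet.iInter fun b => by cases b <;> simpa
    have h4 : iterSum T k + T = (fun p : ℝ × ℝ => p.1 + p.2) '' ((iterSum T k) ×ˢ T) := by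
      rw [Set.image_prod, Set.image2_add]
    rw [h4]
    exact h3.image_of_continuous (continuous_fst.add continuous_snd)

end Aux

/-- Proposition 11: a symmetric analytic set spanning `ℝ` over `ℚ` has a `k`-fold sumset
containing `(−1, 1)`. -/
theorem prop11 (T : Set ℝ)
    (hsym : -T = T)
    (hanal : MeasureTheory.AnalyticSet T)
    (hspan : Submodule.span ℚ T = ⊤) :
    ∃ k : ℕ, 0 < k ∧ ∀ x ∈ Set.Ioo (-1 : ℝ) 1,
      ∃ f : Fin k → ℝ, (∀ i, f i ∈ T) ∧ (∑ i, f i) = x := by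
  classical
  open MeasureTheory Set Pointwise in
  -- Step A: every real has an integer multiple in some iterated sumset
  have hrep : ∀ x : ℝ, ∃ n k : ℕ, 0 < n ∧ (n : ℝ) * x ∈ iterSum T k := by
    intro x
    have hx : x ∈ Submodule.span ℚ T := by rw [hspan]; trivial
    refine Submodule.span_induction (p := fun x _ => ∃ n k : ℕ, 0 < n ∧ (n : ℝ) * x ∈ iterSum T k)
      ?_ ?_ ?_ ?_ hx
    · intro t ht
      refine ⟨1, 1, one_pos, ?_⟩
      have h1 : (0 : ℝ) + t ∈ iterSum T 0 + T := Set.add_mem_add rfl ht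
      rw [zero_add] at h1
      rw [show ((1 : ℕ) : ℝ) = 1 by norm_num, one_mul]
      exact h1
    · exact ⟨1, 0, one_pos, by simp [iterSum]⟩
    · rintro a b _ _ ⟨n, k, hn, hm⟩ ⟨n', k', hn', hm'⟩
      refine ⟨n * n', n' * k + n * k', Nat.mul_pos hn hn', ?_⟩
      have heq : ((n * n' : ℕ) : ℝ) * (a + b)
          = (n' : ℝ) * ((n : ℝ) * a) + (n : ℝ) * ((n' : ℝ) * b) := by push_cast; ring
      rw [heq]
      exact iterSum_add (iterSum_nsmul hm n') (iterSum_nsmul hm' n)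
    · rintro q a _ ⟨n, k, hn, hm⟩
      refine ⟨q.den * n, q.num.natAbs * k, Nat.mul_pos q.den_pos hn, ?_⟩
      have hq : (q : ℝ) * (q.den : ℝ) = (q.num : ℝ) := by
        exact_mod_cast congrArg (fun r : ℚ => (r : ℝ)) (Rat.mul_den_eq_num q)
      have heq : ((q.den * n : ℕ) : ℝ) * (q • a) = (q.num : ℝ) * ((n : ℝ) * a) := by
        rw [Rat.smul_def]
        push_cast
        rw [← hq]
        ring
      rw [heq]
      exact iterSum_zsmul hsym hm q.num
  -- Step B: some iterated sumset has positive outer measure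
  have hcover : (Set.univ : Set ℝ)
      ⊆ ⋃ p : ℕ × ℕ, (fun y => ((p.1 : ℝ) + 1)⁻¹ * y) '' iterSum T p.2 := by
    intro x _
    obtain ⟨n, k, hn, hm⟩ := hrep x
    refine Set.mem_iUnion.2 ⟨(n - 1, k), ⟨(n : ℝ) * x, hm, ?_⟩⟩
    have h1 : ((n - 1 : ℕ) : ℝ) + 1 = (n : ℝ) := by
      have := Nat.succ_pred_eq_of_pos hn
      exact_mod_cast this
    have hn0 : (n : ℝ) ≠ 0 := Nat.cast_ne_zero.2 hn.ne'
    simp only [h1]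
    field_simp
  have hsome : ∃ p : ℕ × ℕ,
      volume ((fun y => ((p.1 : ℝ) + 1)⁻¹ * y) '' iterSum T p.2) ≠ 0 := by
    by_contra h
    push_neg at h
    have h0 : volume (⋃ p : ℕ × ℕ, (fun y => ((p.1 : ℝ) + 1)⁻¹ * y) '' iterSum T p.2) = 0 :=
      by exact MeasureTheory.measure_iUnion_null h
    have hmono2 : volume (Set.univ : Set ℝ)
        ≤ volume (⋃ p : ℕ × ℕ, (fun y => ((p.1 : ℝ) + 1)⁻¹ * y) '' iterSum T p.2) :=
      measure_mono hcover
    rw [h0] at hmono2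
    simp [Real.volume_univ] at hmono2
  obtain ⟨⟨n, k⟩, hposk⟩ := hsome
  have hk : volume (iterSum T k) ≠ 0 := by
    intro h0
    apply hposk
    have himg : (fun y => ((n : ℝ) + 1)⁻¹ * y) '' iterSum T k
        = ((n : ℝ) + 1)⁻¹ • iterSum T k := by
      ext y
      simp only [Set.mem_image, Set.mem_smul_set, smul_eq_mul]
    rw [himg, MeasureTheory.Measure.addHaar_smul, h0, mul_zero]
  have hk0 : 0 < k := by
    rcases Nat.eq_zero_or_pos k with rfl | h
    · exfalso
      apply hk
      show volume ({0} : Set ℝ) = 0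
      simp
    · exact h
  -- Step C/D: compact subset of positive measure, Steinhaus
  obtain ⟨K, hKsub, hKcomp, hKpos⟩ :=
    analyticSet_exists_isCompact_subset (iterSum_analytic hanal k) hk
  have hKmeas : MeasurableSet K := hKcomp.isClosed.measurableSet
  have hsteinhaus : K - K ∈ 𝓝 (0 : ℝ) :=
    MeasureTheory.Measure.sub_mem_nhds_zero_of_addHaar_pos volume K hKmeas
      (pos_iff_ne_zero.2 hKpos)
  obtain ⟨ε, hε, hball⟩ := Metric.mem_nhds_iff.1 hsteinhaus
  obtain ⟨m, hm⟩ := exists_nat_one_div_lt hε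
  -- Step E: conclusion
  refine ⟨(m + 1) * (k + k), by positivity, ?_⟩
  intro x hx
  rw [← mem_iterSum_iff]
  set z : ℝ := x / ((m : ℝ) + 1) with hz
  have hm1 : (0 : ℝ) < (m : ℝ) + 1 := by positivity
  have hzball : z ∈ Metric.ball (0 : ℝ) ε := by
    rw [Metric.mem_ball, Real.dist_0_eq_abs, hz, abs_div, abs_of_pos hm1]
    have hxabs : |x| < 1 := abs_lt.mpr ⟨hx.1, hx.2⟩
    calc |x| / ((m : ℝ) + 1) < 1 / ((m : ℝ) + 1) := by gcongr
      _ < ε := hm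
  have hzK : z ∈ K - K := hball hzball
  obtain ⟨a, ha, b, hb, hab⟩ := Set.mem_sub.1 hzK
  have hmem : a - b ∈ iterSum T (k + k) := by
    have h1 : a - b = a + (-b) := by ring
    rw [h1]
    exact iterSum_add (hKsub ha) (iterSum_neg hsym (hKsub hb))
  have hfin : ((m + 1 : ℕ) : ℝ) * (a - b) = x := by
    rw [hab, hz]
    have : ((m : ℝ) + 1) ≠ 0 := by positivity
    push_cast
    field_simp
  have h2 := iterSum_nsmul hmem (m + 1)
  rw [hfin] at h2
  exact h2
end

section
/- Theorem 5 (Baire–Berz Theorem): If S : ℝ → ℝ is Baire-measurable (the preimage of every open set has the Baire property) and sublinear, then there exist c₊, c₋ ∈ ℝ such that S(u) = c₊u for all u ≥ 0 and S(v) = c₋v for all v ≤ 0. -/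
open Filter Topology

private lemma eps_le (a b : ℝ) (h : ∀ ε : ℝ, 0 < ε → a ≤ b + ε) : a ≤ b := by
  by_contra hc
  push_neg at hc
  have := h ((a - b)/2) (by linarith)
  linarith

private lemma hom_q (S : ℝ → ℝ)
    (hhom : ∀ x : ℝ, ∀ n : ℕ, S ((n : ℝ) * x) = (n : ℝ) * S x)
    (q : ℚ) (hq : 0 ≤ q) (x : ℝ) : S ((q : ℝ) * x) = (q : ℝ) * S x := by
  have hden : (0:ℝ) < (q.den : ℝ) := by positivity
  have hnum : ((q.num.toNat : ℝ)) = (q.num : ℝ) := by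
    exact_mod_cast congrArg (fun z : ℤ => (z : ℝ)) (Int.toNat_of_nonneg (Rat.num_nonneg.mpr hq))
  have hqd : (q.den : ℝ) * (q : ℝ) = (q.num : ℝ) := by
    rw [Rat.cast_def]; field_simp
  have h1 : (q.den : ℝ) * S ((q : ℝ) * x) = S ((q.den : ℝ) * ((q : ℝ) * x)) :=
    (hhom _ q.den).symm
  have h2 : (q.den : ℝ) * ((q : ℝ) * x) = ((q.num.toNat : ℝ)) * x := by
    rw [hnum, ← mul_assoc, hqd]
  have h4 : (q.den : ℝ) * S ((q : ℝ) * x) = (q.den : ℝ) * ((q : ℝ) * S x) := by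
    rw [h1, h2, hhom x q.num.toNat, hnum, ← mul_assoc, hqd]
  exact mul_left_cancel₀ (ne_of_gt hden) h4

private lemma small_pos (S : ℝ → ℝ)
    (hhom : ∀ x : ℝ, ∀ n : ℕ, S ((n : ℝ) * x) = (n : ℝ) * S x)
    (α β M : ℝ) (h0 : 0 < α) (hM0 : 0 ≤ M)
    (hb : ∀ x, α < x → x < β → S x ≤ M) :
    ∀ t, 0 < t → t < β - α → S t ≤ M / α * t := by
  intro t ht htb
  set m : ℕ := ⌊α / t⌋₊ + 1 with hm
  have hm1 : α / t < (m : ℝ) := by exact_mod_cast Nat.lt_floor_add_one (α / t)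
  have hfl : (⌊α / t⌋₊ : ℝ) ≤ α / t := Nat.floor_le (by positivity)
  have hmt_low : α < (m : ℝ) * t := (div_lt_iff₀ ht).mp hm1
  have hmt_high : (m : ℝ) * t < β := by
    have h1 : (m : ℝ) ≤ α / t + 1 := by push_cast [hm]; linarith
    have h2 : (m : ℝ) * t ≤ (α / t + 1) * t := mul_le_mul_of_nonneg_right h1 ht.le
    have h3 : (α / t + 1) * t = α + t := by field_simp
    linarith
  have hS : (m : ℝ) * S t = S ((m : ℝ) * t) := (hhom t m).symm
  have hSb : S ((m : ℝ) * t) ≤ M := hb _ hmt_low hmt_high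
  have hmpos : (0 : ℝ) < (m : ℝ) := by positivity
  have h5 : M ≤ M / α * t * (m : ℝ) := by
    have h6 : M / α * α ≤ M / α * ((m : ℝ) * t) :=
      mul_le_mul_of_nonneg_left hmt_low.le (by positivity)
    have h7 : M / α * α = M := div_mul_cancel₀ M (ne_of_gt h0)
    nlinarith
  have h8 : S t * (m : ℝ) ≤ (M / α * t) * (m : ℝ) := by nlinarith
  exact le_of_mul_le_mul_right h8 hmpos

private lemma bound_interval (S : ℝ → ℝ)
    (hBaire : ∀ U : Set ℝ, IsOpen U → BaireMeasurableSet (S ⁻¹' U))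
    (hsub : ∀ u v : ℝ, S (u + v) ≤ S u + S v) :
    ∃ c r M : ℝ, 0 < r ∧ ∀ x, |x - c| < r → S x ≤ M := by
  obtain ⟨n, hn⟩ : ∃ n : ℕ, ¬ IsMeagre (S ⁻¹' Set.Iic (n : ℝ)) := by
    by_contra h
    push_neg at h
    have hu : (⋃ n : ℕ, S ⁻¹' Set.Iic (n : ℝ)) = Set.univ := by
      ext x
      simp only [Set.mem_iUnion, Set.mem_preimage, Set.mem_Iic, Set.mem_univ, iff_true]
      exact exists_nat_ge (S x)
    have hmea : IsMeagre (Set.univ : Set ℝ) := hu ▸ isMeagre_iUnion h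
    rw [IsMeagre, Set.compl_univ] at hmea
    exact Set.not_nonempty_empty (dense_of_mem_residual hmea).nonempty
  set A : Set ℝ := S ⁻¹' Set.Iic (n : ℝ) with hAdef
  have hA : BaireMeasurableSet A := by
    have h1 := (hBaire (Set.Ioi (n : ℝ)) isOpen_Ioi).compl
    rwa [← Set.preimage_compl, Set.compl_Ioi] at h1
  obtain ⟨U, hUopen, hAU⟩ := hA.residualEq_isOpen
  have hG : {x : ℝ | x ∈ A ↔ x ∈ U} ∈ residual ℝ := by
    filter_upwards [hAU] with x hx
    exact iff_of_eq hx
  have hGA : (A ∩ {x : ℝ | x ∈ A ↔ x ∈ U}).Nonempty := by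
    by_contra h
    rw [Set.not_nonempty_iff_eq_empty] at h
    have hsubc : A ⊆ {x : ℝ | x ∈ A ↔ x ∈ U}ᶜ := fun x hx hxg =>
      Set.eq_empty_iff_forall_notMem.mp h x ⟨hx, hxg⟩
    exact hn ((show IsMeagre {x : ℝ | x ∈ A ↔ x ∈ U}ᶜ by
      rw [IsMeagre, compl_compl]; exact hG).mono hsubc)
  obtain ⟨x₀, hx₀A, hx₀g⟩ := hGA
  have hx₀U : x₀ ∈ U := hx₀g.mp hx₀A
  obtain ⟨r, hr, hball⟩ := Metric.isOpen_iff.mp hUopen x₀ hx₀U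
  refine ⟨2 * x₀, r, 2 * n, hr, fun s hs => ?_⟩
  obtain ⟨a, b, haA, hbA, hab⟩ : ∃ a b : ℝ, a ∈ A ∧ b ∈ A ∧ a + b = s := by
    set f : ℝ → ℝ := fun x => s - x with hfdef
    have hcont : Continuous f := continuous_const.sub continuous_id
    have hopen : IsOpenMap f := by
      have h := ((Homeomorph.neg ℝ).trans (Homeomorph.addLeft s)).isOpenMap
      have he : ⇑((Homeomorph.neg ℝ).trans (Homeomorph.addLeft s)) = f := by
        funext x; simp [hfdef, sub_eq_add_neg]
      rwa [he] at h
    have hGf : f ⁻¹' {x : ℝ | x ∈ A ↔ x ∈ U} ∈ residual ℝ :=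
      tendsto_residual_of_isOpenMap hcont hopen hG
    have hD : ({x : ℝ | x ∈ A ↔ x ∈ U} ∩ f ⁻¹' {x : ℝ | x ∈ A ↔ x ∈ U}) ∈ residual ℝ :=
      Filter.inter_mem hG hGf
    set V : Set ℝ := Metric.ball x₀ r ∩ f ⁻¹' Metric.ball x₀ r with hVdef
    have hVopen : IsOpen V := Metric.isOpen_ball.inter (Metric.isOpen_ball.preimage hcont)
    have hVne : V.Nonempty := by
      have habs : |s / 2 - x₀| = |s - 2 * x₀| / 2 := by
        rw [show s / 2 - x₀ = (s - 2 * x₀) / 2 by ring, abs_div, abs_two]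
      refine ⟨s / 2, ?_, ?_⟩
      · rw [Metric.mem_ball, Real.dist_eq, habs]; linarith
      · simp only [Set.mem_preimage, Metric.mem_ball, Real.dist_eq, hfdef]
        have habs2 : |s - s / 2 - x₀| = |s - 2 * x₀| / 2 := by
          rw [show s - s / 2 - x₀ = (s - 2 * x₀) / 2 by ring, abs_div, abs_two]
        rw [habs2]; linarith
    obtain ⟨x, hxD, hxV⟩ := (dense_of_mem_residual hD).exists_mem_open hVopen hVne
    have hxU : x ∈ U := hball hxV.1
    have hfxU : f x ∈ U := hball hxV.2
    exact ⟨x, f x, hxD.1.mpr hxU, hxD.2.mpr hfxU, by simp [hfdef]⟩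
  have haS : S a ≤ (n : ℝ) := haA
  have hbS : S b ≤ (n : ℝ) := hbA
  calc S s = S (a + b) := by rw [hab]
    _ ≤ S a + S b := hsub a b
    _ ≤ 2 * n := by linarith

private lemma key (S : ℝ → ℝ)
    (hBaire : ∀ U : Set ℝ, IsOpen U → BaireMeasurableSet (S ⁻¹' U))
    (hsub : ∀ u v : ℝ, S (u + v) ≤ S u + S v)
    (hhom : ∀ x : ℝ, ∀ n : ℕ, S ((n : ℝ) * x) = (n : ℝ) * S x) :
    ∀ u : ℝ, 0 < u → S u = u * S 1 := by
  obtain ⟨c, r, M, hr, hbnd⟩ := bound_interval S hBaire hsub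
  set d : ℝ := |c| + r + 1 with hd
  set α : ℝ := c - r + d with hα
  have hα0 : (1:ℝ) ≤ α := by
    have h1 := neg_abs_le c
    simp only [hα, hd]; linarith
  set M₁ : ℝ := max (M + S d) 0 with hM₁
  have hbnd₁ : ∀ x, α < x → x < α + 2*r → S x ≤ M₁ := by
    intro x h1 h2
    have hx : |x - d - c| < r := by
      rw [abs_lt]
      constructor <;> simp only [hα] at h1 h2 <;> linarith
    have h3 : S x ≤ S (x - d) + S d := by
      have := hsub (x - d) d
      rwa [sub_add_cancel] at this
    have h4 : S (x - d) ≤ M := hbnd _ hx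
    calc S x ≤ M + S d := by linarith
      _ ≤ M₁ := le_max_left _ _
  set C : ℝ := M₁ / α with hC
  have hC0 : 0 ≤ C := div_nonneg (le_max_right _ _) (by linarith)
  have hsmall : ∀ t, 0 < t → t < 2*r → S t ≤ C * t := by
    intro t ht ht2
    exact small_pos S hhom α (α + 2*r) M₁ (by linarith) (le_max_right _ _) hbnd₁ t ht
      (by linarith)
  intro u hu
  set K : ℝ := C + |S 1| + 1 with hK
  have hK0 : 0 < K := by
    have := abs_nonneg (S 1); simp only [hK]; linarith
  have habs1 : -S 1 ≤ |S 1| := neg_le_abs _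
  have habs2 : -|S 1| ≤ S 1 := neg_abs_le _
  apply le_antisymm
  · apply eps_le
    intro ε hε
    set η : ℝ := min (min (2*r) u) (ε / K) with hη
    have hη0 : 0 < η := by
      apply lt_min (lt_min (by linarith) hu) (by positivity)
    have hη1 : η ≤ 2*r := le_trans (min_le_left _ _) (min_le_left _ _)
    have hη2 : η ≤ u := le_trans (min_le_left _ _) (min_le_right _ _)
    have hη3 : η ≤ ε / K := min_le_right _ _
    have hηε : η * K ≤ ε := by
      rw [← le_div_iff₀ hK0]; exact hη3
    obtain ⟨q, hq1, hq2⟩ := exists_rat_btwn (show u - η < u by linarith)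
    have hq0 : (0:ℚ) ≤ q := by
      have : (0:ℝ) ≤ (q:ℝ) := by linarith
      exact_mod_cast this
    have hSq : S (q:ℝ) = (q:ℝ) * S 1 := by
      have := hom_q S hhom q hq0 1
      rwa [mul_one] at this
    have ht0 : 0 < u - (q:ℝ) := by linarith
    have ht2 : u - (q:ℝ) < 2*r := by linarith
    have hSt : S (u - (q:ℝ)) ≤ C * (u - (q:ℝ)) := hsmall _ ht0 ht2
    have hsplit : S u ≤ S (q:ℝ) + S (u - (q:ℝ)) := by
      have := hsub (q:ℝ) (u - (q:ℝ))
      rwa [add_sub_cancel] at this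
    have hlin : (q:ℝ) * S 1 ≤ u * S 1 + (u - (q:ℝ)) * |S 1| := by nlinarith
    have hbound : (u - (q:ℝ)) * |S 1| + C * (u - (q:ℝ)) ≤ ε := by
      have e1 : (u - (q:ℝ)) * (|S 1| + C) ≤ η * (|S 1| + C) := by
        apply mul_le_mul_of_nonneg_right (by linarith)
        have := abs_nonneg (S 1); linarith
      have e2 : η * (|S 1| + C) ≤ η * K := by
        apply mul_le_mul_of_nonneg_left _ hη0.le
        simp only [hK]; linarith
      nlinarith
    linarith [hSq ▸ hsplit]
  · apply eps_le
    intro ε hε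
    set η : ℝ := min (2*r) (ε / K) with hη
    have hη0 : 0 < η := lt_min (by linarith) (by positivity)
    have hη1 : η ≤ 2*r := min_le_left _ _
    have hη3 : η ≤ ε / K := min_le_right _ _
    have hηε : η * K ≤ ε := by rw [← le_div_iff₀ hK0]; exact hη3
    obtain ⟨q, hq1, hq2⟩ := exists_rat_btwn (show u < u + η by linarith)
    have hq0 : (0:ℚ) ≤ q := by
      have : (0:ℝ) ≤ (q:ℝ) := by linarith
      exact_mod_cast this
    have hSq : S (q:ℝ) = (q:ℝ) * S 1 := by
      have := hom_q S hhom q hq0 1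
      rwa [mul_one] at this
    have ht0 : 0 < (q:ℝ) - u := by linarith
    have ht2 : (q:ℝ) - u < 2*r := by linarith
    have hSt : S ((q:ℝ) - u) ≤ C * ((q:ℝ) - u) := hsmall _ ht0 ht2
    have hsplit : S (q:ℝ) ≤ S u + S ((q:ℝ) - u) := by
      have := hsub u ((q:ℝ) - u)
      rwa [add_sub_cancel] at this
    have hlin : u * S 1 ≤ (q:ℝ) * S 1 + ((q:ℝ) - u) * |S 1| := by nlinarith
    have hbound : ((q:ℝ) - u) * |S 1| + C * ((q:ℝ) - u) ≤ ε := by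
      have e1 : ((q:ℝ) - u) * (|S 1| + C) ≤ η * (|S 1| + C) := by
        apply mul_le_mul_of_nonneg_right (by linarith)
        have := abs_nonneg (S 1); linarith
      have e2 : η * (|S 1| + C) ≤ η * K := by
        apply mul_le_mul_of_nonneg_left _ hη0.le
        simp only [hK]; linarith
      nlinarith
    linarith [hSq ▸ hsplit]

/-- Theorem 5 (Baire–Berz Theorem): a Baire-measurable sublinear `S : ℝ → ℝ` is linear
on each half-line: `S(u) = c₊u` for `u ≥ 0` and `S(v) = c₋v` for `v ≤ 0`. -/
theorem theorem5 (S : ℝ → ℝ)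
    (hBaire : ∀ U : Set ℝ, IsOpen U → BaireMeasurableSet (S ⁻¹' U))
    (hsub : ∀ u v : ℝ, S (u + v) ≤ S u + S v)
    (hhom : ∀ x : ℝ, ∀ n : ℕ, S ((n : ℝ) * x) = (n : ℝ) * S x) :
    ∃ cp cm : ℝ, (∀ u : ℝ, 0 ≤ u → S u = cp * u) ∧ (∀ v : ℝ, v ≤ 0 → S v = cm * v) := by
  have hS0 : S 0 = 0 := by
    have := hhom 0 0
    simpa using this
  refine ⟨S 1, -S (-1), fun u hu => ?_, fun v hv => ?_⟩
  · rcases eq_or_lt_of_le hu with h | h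
    · rw [← h, mul_zero, hS0]
    · rw [key S hBaire hsub hhom u h]; ring
  · rcases hv.lt_or_eq with h | h
    · set T : ℝ → ℝ := fun x => S (-x) with hT
      have hBT : ∀ U : Set ℝ, IsOpen U → BaireMeasurableSet (T ⁻¹' U) := by
        intro U hU
        exact BaireMeasurableSet.preimage (f := fun x : ℝ => -x) continuous_neg
          (Homeomorph.neg ℝ).isOpenMap (hBaire U hU)
      have hsubT : ∀ a b : ℝ, T (a + b) ≤ T a + T b := by
        intro a b
        have := hsub (-a) (-b)
        simp only [hT]
        rwa [← neg_add] at this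
      have hhomT : ∀ x : ℝ, ∀ n : ℕ, T ((n : ℝ) * x) = (n : ℝ) * T x := by
        intro x n
        simp only [hT]
        rw [show -((n:ℝ) * x) = (n:ℝ) * (-x) by ring]
        exact hhom (-x) n
      have h2 := key T hBT hsubT hhomT (-v) (by linarith)
      simp only [hT, neg_neg] at h2
      rw [h2]; ring
    · rw [h, mul_zero, hS0]
end

section
/- Theorem 6 (Quantifier-Weakening Theorem): Let F : ℝ → ℝ and suppose (i) the set 𝔸_F is dense in ℝ, and (ii) F* satisfies the one-sided Heiberg–Seneta boundedness condition limsup_{u↓0} F*(u) ≤ 0. Then 𝔸_F = ℝ and F* is linear: there exists c ∈ ℝ such that for every u ∈ ℝ the limit lim_{x→+∞}(F(u+x) − F(x)) exists and F*(u) = lim_{x→+∞}(F(u+x) − F(x)) = cu. -/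
open Filter Topology

private lemma shiftTop (v : ℝ) : Tendsto (fun x : ℝ => v + x) atTop atTop :=
  tendsto_atTop_add_const_left atTop v tendsto_id

private lemma aux_add {F : ℝ → ℝ} {u v Lu Lv : ℝ}
    (hu : Tendsto (fun x => F (u + x) - F x) atTop (𝓝 Lu))
    (hv : Tendsto (fun x => F (v + x) - F x) atTop (𝓝 Lv)) :
    Tendsto (fun x => F (u + v + x) - F x) atTop (𝓝 (Lu + Lv)) := by
  have h1 : Tendsto (fun x => F (u + (v + x)) - F (v + x)) atTop (𝓝 Lu) :=
    hu.comp (shiftTop v)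
  have heq : (fun x => F (u + v + x) - F x)
      = fun x => (F (u + (v + x)) - F (v + x)) + (F (v + x) - F x) := by
    funext x; rw [add_assoc]; ring
  rw [heq]; exact h1.add hv

private lemma aux_zero (F : ℝ → ℝ) :
    Tendsto (fun x => F (0 + x) - F x) atTop (𝓝 0) := by
  have heq : (fun x => F (0 + x) - F x) = fun _ => (0 : ℝ) := by
    funext x; simp
  rw [heq]; exact tendsto_const_nhds

private lemma aux_neg {F : ℝ → ℝ} {u Lu : ℝ}
    (hu : Tendsto (fun x => F (u + x) - F x) atTop (𝓝 Lu)) :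
    Tendsto (fun x => F (-u + x) - F x) atTop (𝓝 (-Lu)) := by
  have h1 := hu.comp (shiftTop (-u))
  have heq : ((fun x => F (u + x) - F x) ∘ fun x => -u + x)
      = fun x => F x - F (-u + x) := by
    funext x; simp [add_neg_cancel_left]
  rw [heq] at h1
  have h2 := h1.neg
  simp only [neg_sub] at h2
  exact h2

private lemma aux_nsmul {F : ℝ → ℝ} {u Lu : ℝ}
    (hu : Tendsto (fun x => F (u + x) - F x) atTop (𝓝 Lu)) (n : ℕ) :
    Tendsto (fun x => F ((n : ℝ) * u + x) - F x) atTop (𝓝 ((n : ℝ) * Lu)) := by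
  induction n with
  | zero => simpa using aux_zero F
  | succ n ih =>
      have h := aux_add hu ih
      have heq : u + (n : ℝ) * u = ((n + 1 : ℕ) : ℝ) * u := by push_cast; ring
      have heq2 : Lu + (n : ℝ) * Lu = ((n + 1 : ℕ) : ℝ) * Lu := by push_cast; ring
      rw [heq, heq2] at h
      exact h

private lemma aux_hs {F : ℝ → ℝ} (hHS : limsup (Fstar F) (𝓝[>] (0 : ℝ)) ≤ 0)
    {ε : ℝ} (hε : 0 < ε) :
    ∃ δ > 0, ∀ t : ℝ, 0 < t → t < δ → ∀ᶠ x in atTop, F (t + x) - F x < ε := by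
  have h0 : limsup (Fstar F) (𝓝[>] (0 : ℝ)) < (ε : EReal) :=
    lt_of_le_of_lt hHS (by exact_mod_cast hε)
  have h1 : ∀ᶠ t in 𝓝[>] (0 : ℝ), Fstar F t < (ε : EReal) :=
    eventually_lt_of_limsup_lt h0
  rw [eventually_nhdsWithin_iff] at h1
  rcases Metric.eventually_nhds_iff.mp h1 with ⟨δ, hδ, hδ'⟩
  refine ⟨δ, hδ, fun t ht htδ => ?_⟩
  have h2 : Fstar F t < (ε : EReal) := by
    refine hδ' ?_ ht
    rw [Real.dist_eq, sub_zero, abs_of_pos ht]; exact htδ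
  rw [Fstar] at h2
  have h3 := eventually_lt_of_limsup_lt h2
  filter_upwards [h3] with x hx
  exact_mod_cast hx

private lemma aux_ub {F : ℝ → ℝ} {v L t ε : ℝ} (hε : 0 < ε)
    (hv : Tendsto (fun x => F (v + x) - F x) atTop (𝓝 L))
    (hts : ∀ᶠ x in atTop, F (t + x) - F x < ε) :
    ∀ᶠ x in atTop, F (t + v + x) - F x < L + 2 * ε := by
  have h1 : ∀ᶠ x in atTop, F (t + (v + x)) - F (v + x) < ε := (shiftTop v).eventually hts
  have h2 : ∀ᶠ x in atTop, F (v + x) - F x < L + ε :=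
    hv.eventually_lt_const (by linarith)
  filter_upwards [h1, h2] with x hx1 hx2
  have ha : t + v + x = t + (v + x) := by ring
  rw [ha]; linarith

private lemma aux_lb {F : ℝ → ℝ} {v L t ε : ℝ} (hε : 0 < ε)
    (hv : Tendsto (fun x => F (v + x) - F x) atTop (𝓝 L))
    (hts : ∀ᶠ x in atTop, F (t + x) - F x < ε) :
    ∀ᶠ x in atTop, L - 2 * ε < F (v - t + x) - F x := by
  have h1 : ∀ᶠ x in atTop, F (t + (v - t + x)) - F (v - t + x) < ε :=
    (shiftTop (v - t)).eventually hts
  have h2 : ∀ᶠ x in atTop, L - ε < F (v + x) - F x :=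
    hv.eventually_const_lt (by linarith)
  filter_upwards [h1, h2] with x hx1 hx2
  have ha : t + (v - t + x) = v + x := by ring
  rw [ha] at hx1
  linarith

private lemma aux_klb {F : ℝ → ℝ} (hdense : Dense (AF F))
    (hHS : limsup (Fstar F) (𝓝[>] (0 : ℝ)) ≤ 0) {ε : ℝ} (hε : 0 < ε) :
    ∃ δ > 0, ∀ w Lw : ℝ, Tendsto (fun x => F (w + x) - F x) atTop (𝓝 Lw) →
      0 < w → w < δ → -ε ≤ Lw := by
  obtain ⟨δ₁, hδ₁, hδ₁'⟩ := aux_hs hHS one_pos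
  have UB : ∀ w Lw : ℝ, Tendsto (fun x => F (w + x) - F x) atTop (𝓝 Lw) →
      0 < w → w < δ₁ → Lw ≤ 1 := fun w Lw hw hw0 hwδ =>
    le_of_tendsto hw ((hδ₁' w hw0 hwδ).mono fun x hx => hx.le)
  obtain ⟨w₀, hw₀A, hw₀mem⟩ := hdense.exists_mem_open isOpen_Ioo
    (Set.nonempty_Ioo.mpr hδ₁)
  obtain ⟨L₀, hL₀⟩ := hw₀A
  have hw₀pos : 0 < w₀ := hw₀mem.1
  have hw₀δ : w₀ < δ₁ := hw₀mem.2
  set C : ℝ := max (1 - L₀) 0 with hCdef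
  have hC0 : (0 : ℝ) ≤ C := le_max_right _ _
  refine ⟨min (w₀ / 2) (ε * w₀ / (2 * (C + 1))), lt_min (by positivity)
    (div_pos (mul_pos hε hw₀pos) (by linarith)), fun w Lw hw hw0 hwδ => ?_⟩
  have hww₀ : w < w₀ / 2 := lt_of_lt_of_le hwδ (min_le_left _ _)
  have hwε : w < ε * w₀ / (2 * (C + 1)) := lt_of_lt_of_le hwδ (min_le_right _ _)
  set m := ⌊w₀ / w⌋₊ with hmdef
  have hmle : (m : ℝ) ≤ w₀ / w := Nat.floor_le (by positivity)
  have hmgt : w₀ / w - 1 < (m : ℝ) := Nat.sub_one_lt_floor _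
  have hmw_le : (m : ℝ) * w ≤ w₀ := (le_div_iff₀ hw0).mp hmle
  have hw₀lt : w₀ < w * ((m : ℝ) + 1) := by
    have h := (div_lt_iff₀ hw0).mp (show w₀ / w < (m : ℝ) + 1 by linarith)
    linarith [h, mul_comm ((m : ℝ) + 1) w]
  have h1 := aux_add hL₀ (aux_neg (aux_nsmul hw m))
  simp only [← sub_eq_add_neg] at h1
  have hkey : L₀ - (m : ℝ) * Lw ≤ 1 := by
    rcases eq_or_lt_of_le (show (0 : ℝ) ≤ w₀ - (m : ℝ) * w by linarith) with h0 | h0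
    · rw [← h0] at h1
      have := tendsto_nhds_unique h1 (aux_zero F)
      linarith
    · have hrw : w₀ - (m : ℝ) * w < w := by nlinarith
      exact UB _ _ h1 h0 (by linarith)
  by_contra hcon
  push_neg at hcon
  have hm0 : (0 : ℝ) ≤ (m : ℝ) := Nat.cast_nonneg m
  have h2 : (m : ℝ) * Lw ≤ (m : ℝ) * (-ε) := mul_le_mul_of_nonneg_left hcon.le hm0
  have h4 : -C ≤ (m : ℝ) * Lw := by
    have := le_max_left (1 - L₀) (0 : ℝ)
    linarith
  have h3 : (m : ℝ) * ε ≤ C := by nlinarith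
  have h5 : w * (2 * (C + 1)) < ε * w₀ := (lt_div_iff₀ (by linarith)).mp hwε
  -- w₀ < 2*w*m since w*m > w₀ - w > w₀/2
  have h6 : ε * w₀ < 2 * w * ((m : ℝ) * ε) := by nlinarith
  nlinarith [mul_le_mul_of_nonneg_left h3 (show (0 : ℝ) ≤ 2 * w by linarith)]

private lemma aux_all {F : ℝ → ℝ} (hdense : Dense (AF F))
    (hHS : limsup (Fstar F) (𝓝[>] (0 : ℝ)) ≤ 0) (u : ℝ) :
    ∃ L : ℝ, Tendsto (fun x => F (u + x) - F x) atTop (𝓝 L) := by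
  rw [← cauchy_map_iff_exists_tendsto, Metric.cauchy_iff]
  refine ⟨map_neBot, fun ε hε => ?_⟩
  have hε8 : 0 < ε / 8 := by linarith
  obtain ⟨δ₁, hδ₁, hδ₁'⟩ := aux_hs hHS hε8
  obtain ⟨δ₂, hδ₂, hδ₂'⟩ := aux_klb hdense hHS hε8
  have hmin : 0 < min δ₁ δ₂ := lt_min hδ₁ hδ₂
  set δ : ℝ := min δ₁ δ₂ / 2 with hδdef
  have hδ : 0 < δ := by positivity
  obtain ⟨v₁, hv₁A, hv₁mem⟩ := hdense.exists_mem_open isOpen_Ioo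
    (Set.nonempty_Ioo.mpr (show u - δ < u by linarith))
  obtain ⟨v₂, hv₂A, hv₂mem⟩ := hdense.exists_mem_open isOpen_Ioo
    (Set.nonempty_Ioo.mpr (show u < u + δ by linarith))
  obtain ⟨L₁, hL₁⟩ := hv₁A
  obtain ⟨L₂, hL₂⟩ := hv₂A
  have hd1 : min δ₁ δ₂ ≤ δ₁ := min_le_left _ _
  have hd2 : min δ₁ δ₂ ≤ δ₂ := min_le_right _ _
  obtain ⟨hv₁lo, hv₁u⟩ := hv₁mem
  obtain ⟨hv₂u, hv₂hi⟩ := hv₂mem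
  have hub := aux_ub hε8 hL₁ (hδ₁' (u - v₁) (by linarith) (by linarith))
  simp only [show u - v₁ + v₁ = u from by ring] at hub
  have hlb := aux_lb hε8 hL₂ (hδ₁' (v₂ - u) (by linarith) (by linarith))
  simp only [show v₂ - (v₂ - u) = u from by ring] at hlb
  have hgap := aux_add hL₂ (aux_neg hL₁)
  simp only [← sub_eq_add_neg] at hgap
  have hgapLB : -(ε / 8) ≤ L₂ - L₁ :=
    hδ₂' _ _ hgap (by linarith) (by linarith)
  refine ⟨Set.Ioo (L₂ - 2 * (ε / 8)) (L₁ + 2 * (ε / 8)), ?_, ?_⟩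
  · rw [Filter.mem_map]
    filter_upwards [hub, hlb] with x h1 h2
    exact ⟨h2, h1⟩
  · intro x hx y hy
    rw [Real.dist_eq, abs_sub_lt_iff]
    obtain ⟨hx1, hx2⟩ := hx
    obtain ⟨hy1, hy2⟩ := hy
    constructor <;> linarith

/-- Theorem 6 (Quantifier-Weakening Theorem): if `AF F` is dense and `F*` satisfies the
Heiberg–Seneta condition `limsup_{u↓0} F*(u) ≤ 0`, then `AF F = ℝ` and `F*` is linear,
equal everywhere to the (existing, finite) limit `lim_{x→∞}(F(u+x) − F(x)) = cu`. -/
theorem theorem6 (F : ℝ → ℝ)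
    (hdense : Dense (AF F))
    (hHS : limsup (Fstar F) (𝓝[>] (0 : ℝ)) ≤ 0) :
    AF F = Set.univ ∧ ∃ c : ℝ, ∀ u : ℝ,
      Tendsto (fun x => F (u + x) - F x) atTop (𝓝 (c * u)) ∧
      Fstar F u = ((c * u : ℝ) : EReal) := by
  have hall : ∀ u : ℝ, ∃ L : ℝ, Tendsto (fun x => F (u + x) - F x) atTop (𝓝 L) :=
    aux_all hdense hHS
  set k : ℝ → ℝ := fun u => (hall u).choose with hkdef
  have hk : ∀ u, Tendsto (fun x => F (u + x) - F x) atTop (𝓝 (k u)) :=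
    fun u => (hall u).choose_spec
  have kadd : ∀ a b, k (a + b) = k a + k b := fun a b =>
    tendsto_nhds_unique (hk (a + b)) (aux_add (hk a) (hk b))
  have kneg : ∀ a, k (-a) = -k a := fun a =>
    tendsto_nhds_unique (hk (-a)) (aux_neg (hk a))
  have k0 : k 0 = 0 := tendsto_nhds_unique (hk 0) (aux_zero F)
  have hcont0 : ContinuousAt k 0 := by
    rw [Metric.continuousAt_iff]
    intro ε hε
    have hε4 : 0 < ε / 4 := by linarith
    obtain ⟨δ₁, hδ₁, hδ₁'⟩ := aux_hs hHS hε4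
    obtain ⟨δ₂, hδ₂, hδ₂'⟩ := aux_klb hdense hHS hε4
    refine ⟨min δ₁ δ₂, lt_min hδ₁ hδ₂, fun w hw => ?_⟩
    rw [Real.dist_eq, sub_zero] at hw
    rw [Real.dist_eq, k0, sub_zero]
    have key : ∀ v : ℝ, 0 < v → v < min δ₁ δ₂ → -(ε / 4) ≤ k v ∧ k v ≤ ε / 4 := by
      intro v hv0 hv
      refine ⟨hδ₂' v (k v) (hk v) hv0 (lt_of_lt_of_le hv (min_le_right _ _)), ?_⟩
      exact le_of_tendsto (hk v)
        ((hδ₁' v hv0 (lt_of_lt_of_le hv (min_le_left _ _))).mono fun x hx => hx.le)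
    rcases lt_trichotomy w 0 with h | h | h
    · have hkey := key (-w) (by linarith) (by rwa [abs_of_neg h] at hw)
      rw [kneg] at hkey
      rw [abs_lt]; constructor <;> linarith [hkey.1, hkey.2]
    · rw [h, k0]; simpa using hε
    · have hkey := key w h (by rwa [abs_of_pos h] at hw)
      rw [abs_lt]; constructor <;> linarith [hkey.1, hkey.2]
  let φ : ℝ →+ ℝ := AddMonoidHom.mk' k kadd
  have hcont : Continuous k := continuous_of_continuousAt_zero φ hcont0
  have hψ : ∀ x, φ.toRealLinearMap hcont x = k x := fun x =>
    congrFun (φ.coe_toRealLinearMap hcont) x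
  have hlin : ∀ u : ℝ, k u = k 1 * u := by
    intro u
    have h := (φ.toRealLinearMap hcont).map_smul u (1 : ℝ)
    rw [smul_eq_mul, mul_one, smul_eq_mul, hψ, hψ] at h
    rw [h, mul_comm]
  refine ⟨Set.eq_univ_of_forall fun u => hall u, k 1, fun u => ?_⟩
  have hcu : k 1 * u = k u := (hlin u).symm
  refine ⟨by rw [hcu]; exact hk u, ?_⟩
  have htE : Tendsto (fun x => ((F (u + x) - F x : ℝ) : EReal)) atTop
      (𝓝 ((k u : ℝ) : EReal)) :=
    (continuous_coe_real_ereal.tendsto _).comp (hk u)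
  rw [Fstar, hcu]
  exact htE.limsup_eq
end
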